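/- arXiv:1405.3237 — 2 statements merged into one kernel-verified Lean document; each statement's English description precedes it below -/
import Mathlib

section
/- Let G be a group satisfying (H1) and (H2), and let H, K ∈ L(G) with C_G(H) = C_G(K). Then there exists D ∈ L(G) such that H ∩ D = 1, K ∩ D = 1, and each of the subgroups ⟨H, D⟩ and ⟨K, D⟩ contains the derived subgroup of some finite-index subgroup of G. -/
variable {G : Type*} [Group G]

/-- The conjugate `B ^ g = g⁻¹ * B * g` of a subgroup `B` by an element `g`. -/
def conjBy (B : Subgroup G) (g : G) : Subgroup G :=
  B.map (MulAut.conj g⁻¹).toMonoidHom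

/-- A subgroup is virtually solvable if it has a solvable subgroup of finite index. -/
def VirtSolvable (H : Subgroup G) : Prop :=
  ∃ M : Subgroup G, M ≤ H ∧ M.relIndex H ≠ 0 ∧ IsSolvable ↥M

/-- A subgroup is virtually nilpotent if it has a nilpotent subgroup of finite index. -/
def VirtNilpotent (H : Subgroup G) : Prop :=
  ∃ M : Subgroup G, M ≤ H ∧ M.relIndex H ≠ 0 ∧ Group.IsNilpotent ↥M

/-- Hypothesis (H1): every virtually solvable subgroup whose normalizer has finite index
(i.e. belonging to `L(G)`) is trivial. -/
def HypH1 (G : Type*) [Group G] : Prop :=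
  ∀ H : Subgroup G, (Subgroup.normalizer (H : Set G)).FiniteIndex → VirtSolvable H → H = ⊥

/-- Hypothesis (H2): every nontrivial normal subgroup of `G` contains the derived subgroup
of some finite-index subgroup of `G`. -/
def HypH2 (G : Type*) [Group G] : Prop :=
  ∀ N : Subgroup G, N.Normal → N ≠ ⊥ →
    ∃ G₀ : Subgroup G, G₀.FiniteIndex ∧ ⁅G₀, G₀⁆ ≤ N

/-- `VA K H` means `K ≤va H`: `K ≤ H` and `K` contains the derived subgroup of some
finite-index subgroup of `H`. -/
def VA (K H : Subgroup G) : Prop :=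
  K ≤ H ∧ ∃ A : Subgroup G, A ≤ H ∧ A.relIndex H ≠ 0 ∧ ⁅A, A⁆ ≤ K

/-- A subgroup `B` is basal if its normalizer has finite index and every conjugate of `B`
either equals `B` or meets `B` trivially. -/
def IsBasal (B : Subgroup G) : Prop :=
  (Subgroup.normalizer (B : Set G)).FiniteIndex ∧ ∀ g : G, conjBy B g = B ∨ conjBy B g ⊓ B = ⊥

/-- The rigid normalizer `R(A)` of a basal subgroup `A`: the intersection of the
normalizers of all basal subgroups meeting `A` trivially. -/
def rigidNormalizer (A : Subgroup G) : Subgroup G :=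
  ⨅ B ∈ {B : Subgroup G | IsBasal B ∧ A ⊓ B = ⊥}, (Subgroup.normalizer (B : Set G))

open scoped commutatorElement

/-! ### Auxiliary lemmas about `conjBy` -/

lemma mem_conjBy {B : Subgroup G} {g x : G} : x ∈ conjBy B g ↔ g * x * g⁻¹ ∈ B := by
  constructor
  · rintro ⟨b, hb, rfl⟩
    simpa [MulAut.conj, mul_assoc] using hb
  · intro h
    exact ⟨g * x * g⁻¹, h, by simp [MulAut.conj, mul_assoc]⟩

lemma conjBy_one (B : Subgroup G) : conjBy B 1 = B := by
  ext x; simp [mem_conjBy]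

lemma conjBy_conjBy (B : Subgroup G) (g h : G) : conjBy (conjBy B g) h = conjBy B (g * h) := by
  ext x; simp [mem_conjBy, mul_assoc]

lemma conjBy_inf (A B : Subgroup G) (g : G) : conjBy (A ⊓ B) g = conjBy A g ⊓ conjBy B g := by
  ext x; simp [mem_conjBy, Subgroup.mem_inf]

lemma conjBy_top (g : G) : conjBy (⊤ : Subgroup G) g = ⊤ := by
  ext x; simp [mem_conjBy]

lemma conjBy_injective (g : G) : Function.Injective (fun B : Subgroup G => conjBy B g) := by
  intro A B h
  have := congrArg (fun C => conjBy C g⁻¹) h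
  simpa [conjBy_conjBy, conjBy_one] using this

lemma conjBy_eq_self_of_mem_normalizer {B : Subgroup G} {g : G} (h : g ∈ (Subgroup.normalizer (B : Set G))) :
    conjBy B g = B := by
  ext x
  rw [mem_conjBy]
  exact (Subgroup.mem_normalizer_iff.mp h x).symm

/-! ### Auxiliary lemmas about normalizers and centralizers -/

lemma inf_normalizer {A B : Subgroup G} :
    (Subgroup.normalizer (A : Set G)) ⊓ (Subgroup.normalizer (B : Set G)) ≤ (Subgroup.normalizer ((A ⊓ B : Subgroup G) : Set G)) := by
  intro g hg
  rw [Subgroup.mem_normalizer_iff]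
  intro x
  rw [Subgroup.mem_inf, Subgroup.mem_inf]
  exact and_congr (Subgroup.mem_normalizer_iff.mp hg.1 x) (Subgroup.mem_normalizer_iff.mp hg.2 x)

lemma normalizer_le_normalizer_centralizer (A : Subgroup G) :
    (Subgroup.normalizer (A : Set G)) ≤ (Subgroup.normalizer ((Subgroup.centralizer (A : Set G) : Subgroup G) : Set G)) := by
  have key : ∀ g ∈ (Subgroup.normalizer (A : Set G)), ∀ x ∈ Subgroup.centralizer (A : Set G),
      g * x * g⁻¹ ∈ Subgroup.centralizer (A : Set G) := by
    intro g hg x hx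
    rw [Subgroup.mem_centralizer_iff]
    intro y hy
    have hy' : g⁻¹ * y * g ∈ A := (Subgroup.mem_normalizer_iff''.mp hg y).mp hy
    have hcomm : (g⁻¹ * y * g) * x = x * (g⁻¹ * y * g) :=
      Subgroup.mem_centralizer_iff.mp hx _ hy'
    have := congrArg (fun z => g * z * g⁻¹) hcomm
    simpa [mul_assoc] using this
  intro g hg
  rw [Subgroup.mem_normalizer_iff]
  intro x
  constructor
  · exact fun hx => key g hg x hx
  · intro hx
    have := key g⁻¹ (inv_mem hg) _ hx
    simpa [mul_assoc] using this

lemma commutator_mem_left {B : Subgroup G} {x y : G} (hx : x ∈ B) (hy : y ∈ (Subgroup.normalizer (B : Set G))) :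
    ⁅x, y⁆ ∈ B := by
  have h2 : y * x⁻¹ * y⁻¹ ∈ B := (Subgroup.mem_normalizer_iff.mp hy x⁻¹).mp (inv_mem hx)
  have : x * (y * x⁻¹ * y⁻¹) ∈ B := mul_mem hx h2
  rw [commutatorElement_def]
  simpa [mul_assoc] using this

lemma commutator_mem_right {B : Subgroup G} {x y : G} (hx : x ∈ (Subgroup.normalizer (B : Set G))) (hy : y ∈ B) :
    ⁅x, y⁆ ∈ B := by
  have h2 : x * y * x⁻¹ ∈ B := (Subgroup.mem_normalizer_iff.mp hx y).mp hy
  have : (x * y * x⁻¹) * y⁻¹ ∈ B := mul_mem h2 (inv_mem hy)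
  rw [commutatorElement_def]
  simpa [mul_assoc] using this

lemma mem_top_normalizer {B : Subgroup G} [B.Normal] (g : G) : g ∈ (Subgroup.normalizer (B : Set G)) := by
  rw [Subgroup.normalizer_eq_top_iff.mpr ‹B.Normal›]; trivial

/-- If two subgroups intersect trivially and are both normalized by `N'`, then their
intersections with `N'` commute elementwise. -/
lemma le_centralizer_of_inf_eq_bot {Bg A N' : Subgroup G}
    (hN'B : N' ≤ (Subgroup.normalizer (Bg : Set G))) (hN'A : N' ≤ (Subgroup.normalizer (A : Set G))) (hbot : Bg ⊓ A = ⊥) :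
    Bg ⊓ N' ≤ Subgroup.centralizer ((A ⊓ N' : Subgroup G) : Set G) := by
  intro x hx
  rw [Subgroup.mem_centralizer_iff]
  intro y hy
  have h1 : ⁅x, y⁆ ∈ Bg := commutator_mem_left hx.1 (hN'B hy.2)
  have h2 : ⁅x, y⁆ ∈ A := commutator_mem_right (hN'A hx.2) hy.1
  have : ⁅x, y⁆ ∈ Bg ⊓ A := ⟨h1, h2⟩
  rw [hbot, Subgroup.mem_bot, commutatorElement_eq_one_iff_mul_comm] at this
  exact this.symm

lemma isSolvable_of_metabelian {M : Subgroup G} (h : ⁅⁅M, M⁆, ⁅M, M⁆⁆ = ⊥) :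
    IsSolvable ↥M := by
  show Group.IsSolvable ↥M; rw [Group.isSolvable_def]
  refine ⟨2, ?_⟩
  have h0 : (derivedSeries ↥M 0).map M.subtype = M := by
    rw [derivedSeries_zero, ← MonoidHom.range_eq_map, Subgroup.range_subtype]
  have hmap : (derivedSeries ↥M 2).map M.subtype = ⁅⁅M, M⁆, ⁅M, M⁆⁆ := by
    rw [derivedSeries_succ, Subgroup.map_commutator, derivedSeries_succ,
      Subgroup.map_commutator, h0]
  rw [h, Subgroup.map_eq_bot_iff, Subgroup.ker_subtype, le_bot_iff] at hmap
  exact hmap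

/-- Key lemma: if `A, B ∈ L(G)` have equal centralizers, then `A` meets the centralizer
of `B ⊓ N'` trivially, for `N'` a finite-index normal subgroup normalizing `B`. -/
lemma inter_centralizer_eq_bot (hH1 : HypH1 G) {A B N' : Subgroup G}
    (hAn : (Subgroup.normalizer (A : Set G)).FiniteIndex) (hBn : (Subgroup.normalizer (B : Set G)).FiniteIndex)
    [N'.Normal] (hN'fi : N'.FiniteIndex) (hN'B : N' ≤ (Subgroup.normalizer (B : Set G)))
    (hC : Subgroup.centralizer (A : Set G) = Subgroup.centralizer (B : Set G)) :
    A ⊓ Subgroup.centralizer ((B ⊓ N' : Subgroup G) : Set G) = ⊥ := by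
  set C : Subgroup G := Subgroup.centralizer ((B ⊓ N' : Subgroup G) : Set G) with hCdef
  set X : Subgroup G := C ⊓ N' with hXdef
  have s1 : ⁅X, B⁆ ≤ B ⊓ N' := by
    rw [Subgroup.commutator_le]
    intro x hx b hb
    exact ⟨commutator_mem_right (hN'B hx.2) hb,
      commutator_mem_left hx.2 (mem_top_normalizer b)⟩
  have s2 : ⁅⁅X, B⁆, X⁆ = ⊥ := by
    rw [Subgroup.commutator_eq_bot_iff_le_centralizer, Subgroup.le_centralizer_iff]
    exact le_trans inf_le_left (Subgroup.centralizer_le (SetLike.coe_subset_coe.mpr s1))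
  have s3 : ⁅⁅B, X⁆, X⁆ = ⊥ := by rw [Subgroup.commutator_comm B X]; exact s2
  have s4 : ⁅⁅X, X⁆, B⁆ = ⊥ := Subgroup.commutator_commutator_eq_bot_of_rotate s2 s3
  have hXX : ⁅X, X⁆ ≤ Subgroup.centralizer (A : Set G) := by
    rw [hC]
    exact Subgroup.commutator_eq_bot_iff_le_centralizer.mp s4
  set Z : Subgroup G := A ⊓ C with hZdef
  set M : Subgroup G := Z ⊓ N' with hMdef
  have hMX : M ≤ X := fun x hx => ⟨hx.1.2, hx.2⟩
  have hMA : M ≤ A := le_trans inf_le_left inf_le_left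
  have hMM : ⁅M, M⁆ ≤ M := by
    rw [Subgroup.commutator_le]
    intro g₁ h₁ g₂ h₂
    rw [commutatorElement_def]
    exact mul_mem (mul_mem (mul_mem h₁ h₂) (inv_mem h₁)) (inv_mem h₂)
  have hP : ⁅⁅M, M⁆, ⁅M, M⁆⁆ = ⊥ := by
    rw [Subgroup.commutator_eq_bot_iff_le_centralizer]
    refine le_trans ((Subgroup.commutator_mono hMX hMX).trans hXX) ?_
    exact Subgroup.centralizer_le (SetLike.coe_subset_coe.mpr (hMM.trans hMA))
  have hsolv : IsSolvable ↥M := isSolvable_of_metabelian hP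
  have hZn : (Subgroup.normalizer (A : Set G)) ⊓ (Subgroup.normalizer (B : Set G)) ≤ (Subgroup.normalizer (Z : Set G)) := by
    intro g hg
    refine inf_normalizer ⟨hg.1, ?_⟩
    exact normalizer_le_normalizer_centralizer _ (inf_normalizer ⟨hg.2, mem_top_normalizer g⟩)
  haveI : ((Subgroup.normalizer (A : Set G)) ⊓ (Subgroup.normalizer (B : Set G))).FiniteIndex := by
    haveI := hAn; haveI := hBn; infer_instance
  have hZfi : (Subgroup.normalizer (Z : Set G)).FiniteIndex := Subgroup.finiteIndex_of_le hZn
  have hrel : M.relIndex Z ≠ 0 := by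
    rw [hMdef, Subgroup.inf_relIndex_left]
    intro h0
    have hdvd := Subgroup.relIndex_dvd_index_of_normal (H := N') (K := Z)
    rw [h0] at hdvd
    exact hN'fi.index_ne_zero (Nat.eq_zero_of_zero_dvd hdvd)
  exact hH1 Z hZfi ⟨M, inf_le_left, hrel, hsolv⟩

/-! ### Finiteness of the set of conjugates -/

lemma finite_range_conjBy (L : Subgroup G) (h : (Subgroup.normalizer (L : Set G)).FiniteIndex) :
    (Set.range (conjBy L)).Finite := by
  haveI := h
  have key : ∀ a b : G, (QuotientGroup.leftRel (Subgroup.normalizer (L : Set G))) a b →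
      conjBy L a⁻¹ = conjBy L b⁻¹ := by
    intro a b hab
    rw [QuotientGroup.leftRel_apply] at hab
    ext x
    rw [mem_conjBy, mem_conjBy, inv_inv, inv_inv]
    have h1 := Subgroup.mem_normalizer_iff''.mp hab (a⁻¹ * x * a)
    have h2 : (a⁻¹ * b)⁻¹ * (a⁻¹ * x * a) * (a⁻¹ * b) = b⁻¹ * x * b := by group
    constructor
    · intro hx
      have := h1.mp hx
      rwa [h2] at this
    · intro hx
      exact h1.mpr (by rwa [h2])
  let φ : G ⧸ (Subgroup.normalizer (L : Set G)) → Subgroup G := Quotient.lift (fun g => conjBy L g⁻¹) key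
  have hsub : Set.range (conjBy L) ⊆ Set.range φ := by
    rintro _ ⟨g, rfl⟩
    exact ⟨QuotientGroup.mk g⁻¹, by simp [φ]⟩
  exact (Set.finite_range φ).subset hsub

lemma conjBy_finset_inf {ι : Type*} (s : Finset ι) (f : ι → Subgroup G) (g : G) :
    conjBy (s.inf f) g = s.inf (fun i => conjBy (f i) g) := by
  induction s using Finset.cons_induction with
  | empty => simp [conjBy_top]
  | cons a s ha ih => simp [Finset.inf_cons, conjBy_inf, ih]

lemma le_normalizer_finset_inf {s : Finset (Subgroup G)} {C : Subgroup G}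
    (h : ∀ L ∈ s, C ≤ (Subgroup.normalizer (L : Set G))) : C ≤ (Subgroup.normalizer ((s.inf id : Subgroup G) : Set G)) := by
  induction s using Finset.cons_induction with
  | empty =>
    simp only [Finset.inf_empty]
    exact fun x _ => mem_top_normalizer x
  | cons a s ha ih =>
    rw [Finset.inf_cons]
    exact le_trans (le_inf (h a (Finset.mem_cons_self a s))
      (ih fun L hL => h L (Finset.mem_cons_of_mem hL))) inf_normalizer

lemma conjBy_normalizer_of_normal {C L : Subgroup G} [C.Normal] (hCL : C ≤ (Subgroup.normalizer (L : Set G)))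
    (g : G) : C ≤ (Subgroup.normalizer ((conjBy L g : Subgroup G) : Set G)) := by
  intro n hn
  rw [Subgroup.mem_normalizer_iff]
  intro x
  rw [mem_conjBy, mem_conjBy]
  have hm : g * n * g⁻¹ ∈ C := ‹C.Normal›.conj_mem n hn g
  have := Subgroup.mem_normalizer_iff.mp (hCL hm) (g * x * g⁻¹)
  convert this using 2
  group

theorem statement5 (hH1 : HypH1 G) (hH2 : HypH2 G) (H K : Subgroup G)
    (hHL : (Subgroup.normalizer (H : Set G)).FiniteIndex) (hKL : (Subgroup.normalizer (K : Set G)).FiniteIndex)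
    (hC : Subgroup.centralizer (H : Set G) = Subgroup.centralizer (K : Set G)) :
    ∃ D : Subgroup G, (Subgroup.normalizer (D : Set G)).FiniteIndex ∧ H ⊓ D = ⊥ ∧ K ⊓ D = ⊥ ∧
      (∃ G₀ : Subgroup G, G₀.FiniteIndex ∧ ⁅G₀, G₀⁆ ≤ H ⊔ D) ∧
      (∃ G₁ : Subgroup G, G₁.FiniteIndex ∧ ⁅G₁, G₁⁆ ≤ K ⊔ D) := by
  classical
  have isSolvable_bot : IsSolvable ↥(⊥ : Subgroup G) := by
    refine isSolvable_of_metabelian ?_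
    rw [Subgroup.commutator_eq_bot_iff_le_centralizer]
    exact le_trans (Subgroup.commutator_le.mpr fun a ha b hb => by
      rw [Subgroup.mem_bot] at ha; subst ha; simp) bot_le
  by_cases hH0 : H = ⊥
  · -- degenerate case: `H = ⊥`, whence `K` is central and hence trivial by (H1)
    have hcbot : Subgroup.centralizer ((⊥ : Subgroup G) : Set G) = ⊤ := by
      rw [eq_top_iff]
      intro x _
      rw [Subgroup.mem_centralizer_iff]
      intro y hy
      rw [SetLike.mem_coe, Subgroup.mem_bot] at hy
      subst hy; simp
    have hKcomm : K ≤ Subgroup.centralizer (K : Set G) := by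
      rw [← hC, hH0, hcbot]; exact le_top
    have hKb : ⁅K, K⁆ = ⊥ := Subgroup.commutator_eq_bot_iff_le_centralizer.mpr hKcomm
    have hK0 : K = ⊥ := by
      refine hH1 K hKL ⟨K, le_rfl, ?_, ?_⟩
      · rw [Subgroup.relIndex_self]; exact one_ne_zero
      · refine isSolvable_of_metabelian ?_
        rw [hKb, Subgroup.commutator_eq_bot_iff_le_centralizer]
        exact bot_le
    refine ⟨⊤, ?_, ?_, ?_, ⟨⊤, inferInstance, ?_⟩, ⟨⊤, inferInstance, ?_⟩⟩
    · rw [Subgroup.normalizer_eq_top_iff.mpr inferInstance]; infer_instance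
    · rw [hH0]; simp
    · rw [hK0]; simp
    · rw [sup_top_eq]; exact le_top
    · rw [sup_top_eq]; exact le_top
  · -- main case
    set N' : Subgroup G := ((Subgroup.normalizer (H : Set G)) ⊓ (Subgroup.normalizer (K : Set G))).normalCore with hN'def
    haveI hN₁ : ((Subgroup.normalizer (H : Set G)) ⊓ (Subgroup.normalizer (K : Set G))).FiniteIndex := by
      haveI := hHL; haveI := hKL; infer_instance
    haveI hN'fi : N'.FiniteIndex := Subgroup.finiteIndex_normalCore _
    have hN'H : N' ≤ (Subgroup.normalizer (H : Set G)) :=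
      (Subgroup.normalCore_le _).trans inf_le_left
    have hN'K : N' ≤ (Subgroup.normalizer (K : Set G)) :=
      (Subgroup.normalCore_le _).trans inf_le_right
    -- the finite family of conjugates of `H` and `K`
    have hFfin : (Set.range (conjBy H) ∪ Set.range (conjBy K)).Finite :=
      (finite_range_conjBy H hHL).union (finite_range_conjBy K hKL)
    set Fs : Finset (Subgroup G) := hFfin.toFinset with hFsdef
    have hHF : H ∈ Fs := by
      rw [hFsdef, Set.Finite.mem_toFinset]
      exact Or.inl ⟨1, conjBy_one H⟩
    have hKF : K ∈ Fs := by
      rw [hFsdef, Set.Finite.mem_toFinset]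
      exact Or.inr ⟨1, conjBy_one K⟩
    have hFconj : ∀ L ∈ Fs, ∀ g : G, conjBy L g ∈ Fs := by
      intro L hL g
      rw [hFsdef, Set.Finite.mem_toFinset] at hL ⊢
      rcases hL with ⟨a, rfl⟩ | ⟨a, rfl⟩
      · exact Or.inl ⟨a * g, (conjBy_conjBy H a g).symm⟩
      · exact Or.inr ⟨a * g, (conjBy_conjBy K a g).symm⟩
    have hFnorm : ∀ L ∈ Fs, N' ≤ (Subgroup.normalizer (L : Set G)) := by
      intro L hL
      rw [hFsdef, Set.Finite.mem_toFinset] at hL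
      rcases hL with ⟨a, rfl⟩ | ⟨a, rfl⟩
      · exact conjBy_normalizer_of_normal hN'H a
      · exact conjBy_normalizer_of_normal hN'K a
    -- choose a maximal-size subfamily with nontrivial intersection
    set P : Finset (Finset (Subgroup G)) :=
      Fs.powerset.filter (fun S => S.inf id ≠ ⊥) with hPdef
    have hPne : P.Nonempty := by
      refine ⟨{H}, ?_⟩
      rw [hPdef, Finset.mem_filter, Finset.mem_powerset]
      exact ⟨Finset.singleton_subset_iff.mpr hHF, by simpa using hH0⟩
    obtain ⟨S, hSP, hSmax⟩ := Finset.exists_max_image P Finset.card hPne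
    rw [hPdef, Finset.mem_filter, Finset.mem_powerset] at hSP
    obtain ⟨hSF, hSbot⟩ := hSP
    set B : Subgroup G := S.inf id with hBdef
    have himg : ∀ g : G, (S.image (fun A => conjBy A g)).inf id = conjBy B g := by
      intro g
      rw [Finset.inf_image]
      exact (conjBy_finset_inf S id g).symm
    -- the basal dichotomy
    have hdich : ∀ (g : G), ∀ L ∈ Fs, conjBy B g ≤ L ∨ conjBy B g ⊓ L = ⊥ := by
      intro g L hL
      by_cases hb : conjBy B g ⊓ L = ⊥
      · exact Or.inr hb
      left
      by_cases hLmem : L ∈ S.image (fun A => conjBy A g)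
      · rw [← himg g]
        exact Finset.inf_le hLmem
      · exfalso
        have hTP : insert L (S.image (fun A => conjBy A g)) ∈ P := by
          rw [hPdef, Finset.mem_filter, Finset.mem_powerset]
          constructor
          · intro x hx
            rcases Finset.mem_insert.mp hx with rfl | hx
            · exact hL
            · obtain ⟨A, hA, rfl⟩ := Finset.mem_image.mp hx
              exact hFconj A (hSF hA) g
          · rw [Finset.inf_insert, himg g, id]
            rw [inf_comm]
            exact hb
        have hcard := hSmax _ hTP
        rw [Finset.card_insert_of_notMem hLmem,
          Finset.card_image_of_injective S (conjBy_injective g)] at hcard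
        omega
    -- `N'` normalizes every conjugate of `B`
    have hN'Bg : ∀ g : G, N' ≤ (Subgroup.normalizer ((conjBy B g : Subgroup G) : Set G)) := by
      intro g
      rw [← himg g]
      apply le_normalizer_finset_inf
      intro L hL
      obtain ⟨A, hA, rfl⟩ := Finset.mem_image.mp hL
      exact hFnorm _ (hFconj A (hSF hA) g)
    have hN'B : N' ≤ (Subgroup.normalizer (B : Set G)) := by
      have := hN'Bg 1
      rwa [conjBy_one] at this
    -- `B ⊓ N'` is nontrivial
    have hB'bot : B ⊓ N' ≠ ⊥ := by
      intro hb
      refine hSbot (hH1 B (Subgroup.finiteIndex_of_le hN'B) ⟨B ⊓ N', inf_le_left, ?_, ?_⟩)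
      · rw [Subgroup.inf_relIndex_left]
        intro h0
        have hdvd := Subgroup.relIndex_dvd_index_of_normal (H := N') (K := B)
        rw [h0] at hdvd
        exact hN'fi.index_ne_zero (Nat.eq_zero_of_zero_dvd hdvd)
      · rw [hb]; exact isSolvable_bot
    have hB'g : ∀ g : G, conjBy (B ⊓ N') g = conjBy B g ⊓ N' := by
      intro g
      rw [conjBy_inf]
      congr 1
      exact conjBy_eq_self_of_mem_normalizer (mem_top_normalizer g)
    -- the subgroup `D`
    set D : Subgroup G := Subgroup.centralizer ((H ⊓ N' : Subgroup G) : Set G) ⊓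
      Subgroup.centralizer ((K ⊓ N' : Subgroup G) : Set G) with hDdef
    have hHC : H ⊓ Subgroup.centralizer ((K ⊓ N' : Subgroup G) : Set G) = ⊥ :=
      inter_centralizer_eq_bot hH1 hHL hKL hN'fi hN'K hC
    have hKC : K ⊓ Subgroup.centralizer ((H ⊓ N' : Subgroup G) : Set G) = ⊥ :=
      inter_centralizer_eq_bot hH1 hKL hHL hN'fi hN'H hC.symm
    -- the normal closure `W` of `B ⊓ N'`
    set W : Subgroup G := ⨆ g : G, conjBy (B ⊓ N') g with hWdef
    have hWmap : ∀ h : G, conjBy W h ≤ W := by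
      intro h
      have : conjBy W h = ⨆ a : G, conjBy (conjBy (B ⊓ N') a) h := by
        rw [hWdef]
        exact Subgroup.map_iSup _ _
      rw [this]
      refine iSup_le fun a => ?_
      rw [conjBy_conjBy]
      exact le_iSup (fun g => conjBy (B ⊓ N') g) (a * h)
    have hWnormal : W.Normal := by
      constructor
      intro n hn g
      refine hWmap g⁻¹ (mem_conjBy.mpr ?_)
      simpa [mul_assoc] using hn
    have hWbot : W ≠ ⊥ := by
      intro h0
      refine hB'bot (le_bot_iff.mp ?_)
      rw [← h0]
      have := le_iSup (fun g => conjBy (B ⊓ N') g) 1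
      rwa [conjBy_one] at this
    have hWle : W ≤ (H ⊓ K) ⊔ D := by
      refine iSup_le fun g => ?_
      rw [hB'g g]
      rcases hdich g H hHF with hgH | hgH <;> rcases hdich g K hKF with hgK | hgK
      · exact le_trans (le_inf (inf_le_left.trans hgH) (inf_le_left.trans hgK)) le_sup_left
      · have h1 : conjBy B g ⊓ N' ≤ Subgroup.centralizer ((K ⊓ N' : Subgroup G) : Set G) :=
          le_centralizer_of_inf_eq_bot (hN'Bg g) hN'K hgK
        have h2 : conjBy B g ⊓ N' ≤ H ⊓ Subgroup.centralizer ((K ⊓ N' : Subgroup G) : Set G) :=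
          le_inf (inf_le_left.trans hgH) h1
        rw [hHC] at h2
        exact h2.trans bot_le
      · have h1 : conjBy B g ⊓ N' ≤ Subgroup.centralizer ((H ⊓ N' : Subgroup G) : Set G) :=
          le_centralizer_of_inf_eq_bot (hN'Bg g) hN'H hgH
        have h2 : conjBy B g ⊓ N' ≤ K ⊓ Subgroup.centralizer ((H ⊓ N' : Subgroup G) : Set G) :=
          le_inf (inf_le_left.trans hgK) h1
        rw [hKC] at h2
        exact h2.trans bot_le
      · refine le_trans (le_inf ?_ ?_) le_sup_right
        · exact le_centralizer_of_inf_eq_bot (hN'Bg g) hN'H hgH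
        · exact le_centralizer_of_inf_eq_bot (hN'Bg g) hN'K hgK
    obtain ⟨G₀, hG₀fi, hG₀le⟩ := hH2 W hWnormal hWbot
    refine ⟨D, ?_, ?_, ?_, ⟨G₀, hG₀fi, ?_⟩, ⟨G₀, hG₀fi, ?_⟩⟩
    · refine Subgroup.finiteIndex_of_le
        (H := (Subgroup.normalizer (H : Set G)) ⊓ (Subgroup.normalizer (K : Set G))) (K := (Subgroup.normalizer (D : Set G))) ?_
      intro g hg
      refine inf_normalizer ⟨?_, ?_⟩
      · exact normalizer_le_normalizer_centralizer _
          (inf_normalizer ⟨hg.1, mem_top_normalizer g⟩)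
      · exact normalizer_le_normalizer_centralizer _
          (inf_normalizer ⟨hg.2, mem_top_normalizer g⟩)
    · rw [← le_bot_iff, ← hHC]
      exact le_inf inf_le_left (inf_le_right.trans inf_le_right)
    · rw [← le_bot_iff, ← hKC]
      exact le_inf inf_le_left (inf_le_right.trans inf_le_left)
    · exact hG₀le.trans (hWle.trans (sup_le_sup_right inf_le_left D))
    · exact hG₀le.trans (hWle.trans (sup_le_sup_right inf_le_right D))
end

section
/- Let G be a group satisfying (H1) and (H2). Let H₁, H₂, K₁, K₂ ∈ L(G) with C_G(H₁) = C_G(H₂) and C_G(K₁) = C_G(K₂). Then C_G(H₁ ∩ K₁) = C_G(H₂ ∩ K₂). (That is, the equivalence relation H ~ K defined by C_G(H) = C_G(K) is compatible with the meet operation on L(G).) -/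
variable {G : Type*} [Group G]

open scoped commutatorElement

namespace Wil

lemma memc {H : Subgroup G} {a b : G} (e : a = b) (h : a ∈ H) : b ∈ H := e ▸ h

/-- conjugation of a subgroup: `x ∈ cj g H ↔ g⁻¹ x g ∈ H`. -/
def cj (g : G) (H : Subgroup G) : Subgroup G where
  carrier := {x | g⁻¹ * x * g ∈ H}
  one_mem' := by simpa using H.one_mem
  mul_mem' := by
    intro a b ha hb
    simp only [Set.mem_setOf_eq] at *
    exact memc (by group) (H.mul_mem ha hb)
  inv_mem' := by
    intro a ha
    simp only [Set.mem_setOf_eq] at *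
    exact memc (by group) (H.inv_mem ha)

lemma mem_cj {g x : G} {H : Subgroup G} : x ∈ cj g H ↔ g⁻¹ * x * g ∈ H := Iff.rfl

lemma cj_cj (g h : G) (H : Subgroup G) : cj g (cj h H) = cj (g * h) H := by
  ext x
  simp only [mem_cj]
  constructor
  · exact fun hx => memc (by group) hx
  · exact fun hx => memc (by group) hx

lemma cj_one (H : Subgroup G) : cj (1 : G) H = H := by
  ext x
  simp only [mem_cj]
  constructor
  · exact fun hx => memc (by group) hx
  · exact fun hx => memc (by group) hx

lemma cj_mono {g : G} {H K : Subgroup G} (h : H ≤ K) : cj g H ≤ cj g K := by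
  intro x hx; exact h hx

lemma cj_inv_cj (g : G) (H : Subgroup G) : cj g (cj g⁻¹ H) = H := by
  rw [cj_cj, mul_inv_cancel, cj_one]

lemma cj_inv_cj' (g : G) (H : Subgroup G) : cj g⁻¹ (cj g H) = H := by
  rw [cj_cj, inv_mul_cancel, cj_one]

lemma cj_le_iff {g : G} {H K : Subgroup G} : cj g H ≤ K ↔ H ≤ cj g⁻¹ K := by
  constructor
  · intro h x hx
    rw [mem_cj, inv_inv]
    exact h (mem_cj.mpr (memc (by group : x = _) hx))
  · intro h x hx
    have h2 := h (mem_cj.mp hx)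
    rw [mem_cj, inv_inv] at h2
    exact memc (by group) h2

lemma cj_bot (g : G) : cj g (⊥ : Subgroup G) = ⊥ := by
  ext x
  simp only [mem_cj, Subgroup.mem_bot]
  constructor
  · intro h
    have : g * (g⁻¹ * x * g) * g⁻¹ = g * 1 * g⁻¹ := by rw [h]
    calc x = g * (g⁻¹ * x * g) * g⁻¹ := by group
    _ = g * 1 * g⁻¹ := this
    _ = 1 := by group
  · rintro rfl; group

lemma cj_ne_bot {g : G} {H : Subgroup G} (h : H ≠ ⊥) : cj g H ≠ ⊥ := by
  intro hb
  apply h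
  have := congrArg (cj g⁻¹) hb
  rwa [cj_inv_cj', cj_bot] at this

lemma cj_inf (g : G) (H K : Subgroup G) : cj g (H ⊓ K) = cj g H ⊓ cj g K := by
  ext x; simp [mem_cj, Subgroup.mem_inf]

lemma cj_eq_self_of_mem_normalizer {g : G} {H : Subgroup G} (hg : g ∈ (Subgroup.normalizer ((H : Subgroup G) : Set G))) :
    cj g H = H := by
  ext x
  rw [mem_cj]
  constructor
  · intro h
    exact memc (by group) ((Subgroup.mem_normalizer_iff.mp hg _).mp h)
  · intro h
    apply (Subgroup.mem_normalizer_iff.mp hg (g⁻¹ * x * g)).mpr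
    exact memc (by group) h

lemma mem_normalizer_of_cj_eq {g : G} {H : Subgroup G} (h : cj g H = H) :
    g ∈ (Subgroup.normalizer ((H : Subgroup G) : Set G)) := by
  rw [Subgroup.mem_normalizer_iff]
  intro x
  constructor
  · intro hx
    have : g * x * g⁻¹ ∈ cj g H := mem_cj.mpr (memc (by group) hx)
    rwa [h] at this
  · intro hx
    rw [← h] at hx
    exact memc (by group) (mem_cj.mp hx)

lemma cj_mem_iff_of_eq_self {g : G} {H : Subgroup G} (h : cj g H = H) {x : G} :
    g⁻¹ * x * g ∈ H ↔ x ∈ H := by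
  rw [← mem_cj, h]

lemma cj_eq_self_inv {g : G} {H : Subgroup G} (h : cj g H = H) : cj g⁻¹ H = H := by
  conv_lhs => rw [← h, cj_inv_cj']

lemma cj_sInf (g : G) (S : Set (Subgroup G)) :
    cj g (sInf S) = sInf ((cj g) '' S) := by
  ext x
  simp only [mem_cj, Subgroup.mem_sInf, Set.forall_mem_image]

lemma cj_eq_self_of_normal {g : G} {Q : Subgroup G} (hQ : Q.Normal) : cj g Q = Q := by
  ext x
  rw [mem_cj]
  constructor
  · intro h
    exact memc (by group) (hQ.conj_mem _ h g)
  · intro h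
    exact memc (by group) (hQ.conj_mem _ h g⁻¹)


/-- centralizer of a subgroup -/
def Cz (H : Subgroup G) : Subgroup G := Subgroup.centralizer (H : Set G)

lemma mem_Cz {x : G} {H : Subgroup G} : x ∈ Cz H ↔ ∀ h ∈ H, h * x = x * h :=
  Subgroup.mem_centralizer_iff

lemma Cz_anti {H K : Subgroup G} (h : H ≤ K) : Cz K ≤ Cz H :=
  Subgroup.centralizer_le h

lemma mem_Cz_of_le {x : G} {H K : Subgroup G} (h : H ≤ K) (hx : x ∈ Cz K) : x ∈ Cz H :=
  Cz_anti h hx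

lemma Cz_le_normalizer {H : Subgroup G} : Cz H ≤ (Subgroup.normalizer ((H : Subgroup G) : Set G)) := by
  intro x hx
  rw [Subgroup.mem_normalizer_iff]
  intro h
  constructor
  · intro hh
    have e := mem_Cz.mp hx h hh
    have e2 : x * h * x⁻¹ = h := by
      calc x * h * x⁻¹ = (x * h) * x⁻¹ := by group
      _ = (h * x) * x⁻¹ := by rw [← e]
      _ = h := by group
    rw [e2]; exact hh
  · intro hh
    have e := mem_Cz.mp hx _ hh
    have e2 : x⁻¹ * (x * h * x⁻¹) * x = x * h * x⁻¹ := by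
      calc x⁻¹ * (x * h * x⁻¹) * x = x⁻¹ * ((x * h * x⁻¹) * x) := by group
      _ = x⁻¹ * (x * (x * h * x⁻¹)) := by rw [e]
      _ = x * h * x⁻¹ := by group
    have e3 : h = x⁻¹ * (x * h * x⁻¹) * x := by group
    rw [e3, e2]; exact hh

lemma cj_Cz (g : G) (H : Subgroup G) : cj g (Cz H) = Cz (cj g H) := by
  ext x
  simp only [mem_cj, mem_Cz]
  constructor
  · intro h y hy
    have e := h _ (mem_cj.mp hy)
    -- e : (g⁻¹ y g) * (g⁻¹ x g) = (g⁻¹ x g) * (g⁻¹ y g)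
    have := congrArg (fun z => g * z * g⁻¹) e
    calc y * x = g * ((g⁻¹ * y * g) * (g⁻¹ * x * g)) * g⁻¹ := by group
    _ = g * ((g⁻¹ * x * g) * (g⁻¹ * y * g)) * g⁻¹ := by rw [e]
    _ = x * y := by group
  · intro h y hy
    have hy' : g * y * g⁻¹ ∈ cj g H := mem_cj.mpr (memc (by group) hy)
    have e := h _ hy'
    calc y * (g⁻¹ * x * g) = g⁻¹ * ((g * y * g⁻¹) * x) * g := by group
    _ = g⁻¹ * (x * (g * y * g⁻¹)) * g := by rw [e]
    _ = (g⁻¹ * x * g) * y := by group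

lemma finiteIndex_of_le' {H K : Subgroup G} (h : H ≤ K) (hH : H.FiniteIndex) :
    K.FiniteIndex := by
  haveI := hH
  exact Subgroup.finiteIndex_of_le h

/-- H1 trap: an abelian subgroup whose normalizer has finite index is trivial. -/
lemma trapAbel (hH1 : HypH1 G) (V : Subgroup G) (hV : (Subgroup.normalizer ((V : Subgroup G) : Set G)).FiniteIndex)
    (hc : ∀ a ∈ V, ∀ b ∈ V, a * b = b * a) : V = ⊥ := by
  refine hH1 V hV ⟨V, le_rfl, ?_, ?_⟩
  · rw [Subgroup.relIndex_self]; exact one_ne_zero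
  · exact isSolvable_of_comm fun a b => Subtype.ext (hc a a.2 b b.2)

/-- H1 trap: a finite subgroup whose normalizer has finite index is trivial. -/
lemma trapFinite (hH1 : HypH1 G) (V : Subgroup G) (hV : (Subgroup.normalizer ((V : Subgroup G) : Set G)).FiniteIndex)
    (hf : Finite ↥V) : V = ⊥ := by
  refine hH1 V hV ⟨⊥, bot_le, ?_, ?_⟩
  · rw [Subgroup.relIndex_bot_left]
    haveI := hf
    exact Nat.card_pos.ne'
  · exact isSolvable_of_comm fun a b => Subsingleton.elim _ _

lemma normal_centralizer {N : Subgroup G} (hN : N.Normal) : (Cz N).Normal := by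
  constructor
  intro x hx g
  rw [mem_Cz]
  intro h hh
  have hh' : g⁻¹ * h * g ∈ N := memc (by group) (hN.conj_mem h hh g⁻¹)
  have e := mem_Cz.mp hx _ hh'
  calc h * (g * x * g⁻¹) = g * ((g⁻¹ * h * g) * x) * g⁻¹ := by group
  _ = g * (x * (g⁻¹ * h * g)) * g⁻¹ := by rw [e]
  _ = (g * x * g⁻¹) * h := by group

/-- every nontrivial normal subgroup has trivial centralizer. -/
lemma factB (hH1 : HypH1 G) (hH2 : HypH2 G) (N : Subgroup G) (hN : N.Normal)
    (hne : N ≠ ⊥) : Cz N = ⊥ := by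
  obtain ⟨G₀, hfi, hcomm⟩ := hH2 N hN hne
  have hCzNormal : (Cz N).Normal := normal_centralizer hN
  have hCznorm : (Subgroup.normalizer ((Cz N : Subgroup G) : Set G)).FiniteIndex := by
    rw [Subgroup.normalizer_eq_top_iff.mpr hCzNormal]
    infer_instance
  -- step 1 : Cz N ⊓ N = ⊥
  have step1 : Cz N ⊓ N = ⊥ := by
    have habel : ∀ a ∈ Cz N ⊓ N, ∀ b ∈ Cz N ⊓ N, a * b = b * a := by
      intro a ha b hb
      exact (mem_Cz.mp ha.1 b hb.2).symm
    refine trapAbel hH1 _ ?_ habel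
    have : (Cz N ⊓ N).Normal := Subgroup.normal_inf_normal _ _
    rw [Subgroup.normalizer_eq_top_iff.mpr this]
    infer_instance
  -- step 2 : Cz N ⊓ G₀ is abelian
  have habel : ∀ a ∈ Cz N ⊓ G₀, ∀ b ∈ Cz N ⊓ G₀, a * b = b * a := by
    intro a ha b hb
    have h1 : ⁅a, b⁆ ∈ Cz N ⊓ N := by
      constructor
      · rw [commutatorElement_def]
        exact mul_mem (mul_mem (mul_mem ha.1 hb.1) ((Cz N).inv_mem ha.1)) ((Cz N).inv_mem hb.1)
      · exact hcomm (Subgroup.commutator_mem_commutator ha.2 hb.2)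
    rw [step1, Subgroup.mem_bot] at h1
    exact commutatorElement_eq_one_iff_mul_comm.mp h1
  refine hH1 (Cz N) hCznorm ⟨Cz N ⊓ G₀, inf_le_left, ?_, ?_⟩
  · rw [inf_comm, Subgroup.inf_relIndex_right]
    intro h0
    exact hfi.index_ne_zero (Subgroup.index_eq_zero_of_relIndex_eq_zero h0)
  · exact isSolvable_of_comm fun a b => Subtype.ext (habel a a.2 b b.2)

/-- The core family construction: minimal nontrivial intersections of conjugates of roots. -/
lemma core (hH1 : HypH1 G) (hH2 : HypH2 G) (Q : Subgroup G) (hQn : Q.Normal)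
    (hQf : Q.FiniteIndex) (roots : Set (Subgroup G)) (hfin : roots.Finite)
    (hcj : ∀ (g : G), ∀ P ∈ roots, cj g P ∈ roots)
    (hleQ : ∀ P ∈ roots, P ≤ Q)
    (hnorm : ∀ P ∈ roots, ∀ q ∈ Q, cj q P = P)
    (hne : ∃ P ∈ roots, P ≠ ⊥) :
    ∃ Fac : Subgroup G → Prop,
      (∀ P, Fac P → P ≠ ⊥) ∧
      (∀ P, Fac P → P ≤ Q) ∧
      (∀ P, Fac P → ∀ q ∈ Q, cj q P = P) ∧
      (∀ (g : G) P, Fac P → Fac (cj g P)) ∧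
      (∀ P R, Fac P → R ∈ roots → P ≤ R ∨ (P ⊓ R = ⊥ ∧ ∀ p ∈ P, ∀ r ∈ R, p * r = r * p)) ∧
      (∀ P P', Fac P → Fac P' → P = P' ∨ ∀ p ∈ P, ∀ p' ∈ P', p * p' = p' * p) ∧
      (∀ z : G, (∀ P, Fac P → ∀ p ∈ P, p * z = z * p) → z = 1) ∧
      (∀ W : Subgroup G, (∀ P, Fac P → P ≤ W) →
        ∃ R : Subgroup G, R.FiniteIndex ∧ ⁅R, R⁆ ≤ W) := by
  classical
  set F : Set (Subgroup G) :=
    {D | ∃ s : Set (Subgroup G), s ⊆ roots ∧ s.Nonempty ∧ D = sInf s} with hF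
  have Ffin : F.Finite := by
    have h1 : F ⊆ sInf '' {s : Set (Subgroup G) | s ⊆ roots} := by
      rintro D ⟨s, hs, _, rfl⟩
      exact ⟨s, hs, rfl⟩
    exact Set.Finite.subset (Set.Finite.image _ hfin.finite_subsets) h1
  have Froot : ∀ P ∈ roots, P ∈ F := by
    intro P hP
    exact ⟨{P}, by simp [hP], ⟨P, rfl⟩, sInf_singleton.symm⟩
  have FleQ : ∀ D ∈ F, D ≤ Q := by
    rintro D ⟨s, hs, ⟨P0, hP0⟩, rfl⟩
    exact le_trans (sInf_le hP0) (hleQ P0 (hs hP0))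
  have FnormQ : ∀ D ∈ F, ∀ q ∈ Q, cj q D = D := by
    rintro D ⟨s, hs, hsn, rfl⟩ q hq
    rw [cj_sInf]
    congr 1
    have : ∀ P ∈ s, cj q P = id P := fun P hP => hnorm P (hs hP) q hq
    rw [Set.image_congr this, Set.image_id]
  have Fcj : ∀ (g : G), ∀ D ∈ F, cj g D ∈ F := by
    rintro g D ⟨s, hs, hsn, rfl⟩
    refine ⟨cj g '' s, ?_, hsn.image _, ?_⟩
    · rintro P ⟨P0, hP0, rfl⟩
      exact hcj g P0 (hs hP0)
    · rw [cj_sInf]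
  have Finf : ∀ D ∈ F, ∀ E ∈ F, D ⊓ E ∈ F := by
    rintro D ⟨s, hs, hsn, rfl⟩ E ⟨t, ht, htn, rfl⟩
    exact ⟨s ∪ t, Set.union_subset hs ht, hsn.mono Set.subset_union_left,
      by rw [sInf_union]⟩
  have FnormFin : ∀ D ∈ F, (Subgroup.normalizer ((D : Subgroup G) : Set G)).FiniteIndex := by
    intro D hD
    exact finiteIndex_of_le' (fun q hq => mem_normalizer_of_cj_eq (FnormQ D hD q hq)) hQf
  have Jt : ∀ D ∈ F, ∀ E ∈ F, D ⊓ E = ⊥ → ∀ d ∈ D, ∀ e ∈ E, d * e = e * d := by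
    intro D hD E hE hbot d hd e he
    have he' : e ∈ Q := FleQ E hE he
    have hd' : d ∈ Q := FleQ D hD hd
    have c1 : e⁻¹ * d * e ∈ D := by
      have hD2 := FnormQ D hD e he'
      exact mem_cj.mp (by rw [hD2]; exact hd)
    have hcD : d⁻¹ * (e⁻¹ * d * e) ∈ D := D.mul_mem (D.inv_mem hd) c1
    have c2 : d⁻¹ * e⁻¹ * d ∈ E := by
      have hE2 := FnormQ E hE d hd'
      exact mem_cj.mp (by rw [hE2]; exact E.inv_mem he)
    have hcE : d⁻¹ * (e⁻¹ * d * e) ∈ E := by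
      have e2 : d⁻¹ * (e⁻¹ * d * e) = (d⁻¹ * e⁻¹ * d) * e := by group
      rw [e2]; exact E.mul_mem c2 he
    have hmem : d⁻¹ * (e⁻¹ * d * e) ∈ D ⊓ E := ⟨hcD, hcE⟩
    rw [hbot, Subgroup.mem_bot] at hmem
    calc d * e = (e * d) * (d⁻¹ * (e⁻¹ * d * e)) := by group
    _ = (e * d) * 1 := by rw [hmem]
    _ = e * d := by group
  -- choose a minimal nontrivial member
  obtain ⟨B, hBmem, hBmin⟩ : ∃ B ∈ {D ∈ F | D ≠ ⊥}, ∀ D ∈ {D ∈ F | D ≠ ⊥},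
      id D ≤ id B → id B = id D := by
    obtain ⟨B, hB1, hB2⟩ := Set.Finite.exists_minimal
      (s := {D ∈ F | D ≠ ⊥}) (Ffin.subset (Set.sep_subset _ _)) (by
        obtain ⟨P, hP, hPne⟩ := hne
        exact ⟨P, Froot P hP, hPne⟩)
    exact ⟨B, hB1, fun D hD hle => le_antisymm (hB2 hD hle) hle⟩
  obtain ⟨hBF, hBne⟩ := hBmem
  set Fac : Subgroup G → Prop := fun P => ∃ g : G, P = cj g B with hFac
  have FacF : ∀ P, Fac P → P ∈ F := by
    rintro P ⟨g, rfl⟩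
    exact Fcj g B hBF
  have Facmin : ∀ P, Fac P → ∀ D ∈ F, D ≤ P → D ≠ ⊥ → D = P := by
    rintro P ⟨g, rfl⟩ D hD hle hne'
    have h1 : cj g⁻¹ D ∈ F := Fcj g⁻¹ D hD
    have h2 : cj g⁻¹ D ≤ B := by
      have := cj_mono (g := g⁻¹) hle
      rwa [cj_inv_cj'] at this
    have h3 : cj g⁻¹ D ≠ ⊥ := cj_ne_bot hne'
    have h4 := hBmin (cj g⁻¹ D) ⟨h1, h3⟩ h2
    simp only [id] at h4
    rw [h4, cj_inv_cj]
  have P1 : ∀ P, Fac P → P ≠ ⊥ := by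
    rintro P ⟨g, rfl⟩
    exact cj_ne_bot hBne
  have P2 : ∀ P, Fac P → P ≤ Q := by
    rintro P ⟨g, rfl⟩
    have := cj_mono (g := g) (FleQ B hBF)
    rwa [cj_eq_self_of_normal hQn] at this
  have P3 : ∀ P, Fac P → ∀ q ∈ Q, cj q P = P := by
    rintro P ⟨g, rfl⟩ q hq
    have hq' : g⁻¹ * q * g ∈ Q := memc (by group) (hQn.conj_mem q hq g⁻¹)
    have h1 : q * g = g * (g⁻¹ * q * g) := by group
    rw [cj_cj, h1, ← cj_cj, FnormQ B hBF _ hq']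
  have P4 : ∀ (g : G), ∀ P, Fac P → Fac (cj g P) := by
    rintro g P ⟨h, rfl⟩
    exact ⟨g * h, cj_cj g h B⟩
  have P7 : ∀ P R, Fac P → R ∈ roots →
      P ≤ R ∨ (P ⊓ R = ⊥ ∧ ∀ p ∈ P, ∀ r ∈ R, p * r = r * p) := by
    intro P R hP hR
    have hPR : P ⊓ R ∈ F := Finf P (FacF P hP) R (Froot R hR)
    by_cases hb : P ⊓ R = ⊥
    · exact Or.inr ⟨hb, Jt P (FacF P hP) R (Froot R hR) hb⟩
    · left
      have := Facmin P hP (P ⊓ R) hPR inf_le_left hb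
      exact inf_eq_left.mp this
  have P8 : ∀ P P', Fac P → Fac P' →
      P = P' ∨ ∀ p ∈ P, ∀ p' ∈ P', p * p' = p' * p := by
    intro P P' hP hP'
    by_cases he : P = P'
    · exact Or.inl he
    · right
      have hPP' : P ⊓ P' ∈ F := Finf P (FacF P hP) P' (FacF P' hP')
      by_cases hb : P ⊓ P' = ⊥
      · exact Jt P (FacF P hP) P' (FacF P' hP') hb
      · exfalso
        apply he
        have h1 := Facmin P hP (P ⊓ P') hPP' inf_le_left hb
        have h2 := Facmin P' hP' (P ⊓ P') hPP' inf_le_right hb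
        exact h1.symm.trans h2
  set NS := Subgroup.normalClosure (B : Set G) with hNS
  have hNSne : NS ≠ ⊥ := by
    intro hb
    apply hBne
    have hle := Subgroup.le_normalClosure (H := B)
    rw [← hNS, hb, le_bot_iff] at hle
    exact hle
  have hcover : ∀ W : Subgroup G, (∀ P, Fac P → P ≤ W) → NS ≤ W := by
    intro W hW
    rw [hNS]
    show Subgroup.closure (Group.conjugatesOfSet (B : Set G)) ≤ _
    rw [Subgroup.closure_le]
    intro y hy
    obtain ⟨b, hb, hconj⟩ := Group.mem_conjugatesOfSet_iff.mp hy
    obtain ⟨c, hc⟩ := isConj_iff.mp hconj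
    have hyP : y ∈ cj c B := by
      rw [mem_cj, ← hc]
      exact memc (by group) hb
    exact hW (cj c B) ⟨c, rfl⟩ hyP
  refine ⟨Fac, P1, P2, P3, P4, P7, P8, ?_, ?_⟩
  · intro z hz
    have hCzNS : Cz NS = ⊥ := factB hH1 hH2 NS Subgroup.normalClosure_normal hNSne
    have hzNS : z ∈ Cz NS := by
      rw [mem_Cz]
      intro h hh
      have hsub : NS ≤ Subgroup.centralizer {z} := by
        apply hcover
        intro P hP p hp
        show p ∈ Subgroup.centralizer {z}
        rw [Subgroup.mem_centralizer_iff]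
        intro m hm
        rw [Set.mem_singleton_iff] at hm
        subst hm
        exact (hz P hP p hp).symm
      have h2 := hsub hh
      rw [Subgroup.mem_centralizer_iff] at h2
      exact (h2 z rfl).symm
    rw [hCzNS, Subgroup.mem_bot] at hzNS
    exact hzNS
  · intro W hW
    obtain ⟨G₀, h1, h2⟩ := hH2 NS Subgroup.normalClosure_normal hNSne
    exact ⟨G₀, h1, h2.trans (hcover W hW)⟩

lemma claimM (hH1 : HypH1 G) (Q : Subgroup G) (hQn : Q.Normal) (hQf : Q.FiniteIndex)
    (Fac : Subgroup G → Prop)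
    (P1 : ∀ P, Fac P → P ≠ ⊥) (P2 : ∀ P, Fac P → P ≤ Q)
    (P3 : ∀ P, Fac P → ∀ q ∈ Q, cj q P = P)
    (P4 : ∀ (g : G), ∀ P, Fac P → Fac (cj g P))
    (P8 : ∀ P P', Fac P → Fac P' → P = P' ∨ ∀ p ∈ P, ∀ p' ∈ P', p * p' = p' * p)
    (X : Subgroup G) (hXQle : Q ≤ (Subgroup.normalizer ((X : Subgroup G) : Set G)))
    (hdi : ∀ P, Fac P → ¬ P ≤ X ⊓ Q →
      (P ⊓ (X ⊓ Q) = ⊥ ∧ ∀ p ∈ P, ∀ r ∈ X ⊓ Q, p * r = r * p)) :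
    ∀ P, Fac P → ¬ P ≤ X ⊓ Q → ∀ t ∈ X, ∀ b ∈ P, t * b = b * t := by
  intro P hP hPle t ht
  have hPQ := P2 P hP
  have hw : ∀ b ∈ P, (t⁻¹ * b⁻¹ * t) * b ∈ X ⊓ Q := by
    intro b hb
    constructor
    · have hbX : cj b X = X := cj_eq_self_of_mem_normalizer (hXQle (hPQ hb))
      have h1 : b⁻¹ * t * b ∈ X := mem_cj.mp (by rw [hbX]; exact ht)
      exact memc (by group) (X.mul_mem (X.inv_mem ht) h1)
    · have hbQ : b ∈ Q := hPQ hb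
      have h2 : t⁻¹ * b⁻¹ * t ∈ Q := memc (by group) (hQn.conj_mem b⁻¹ (Q.inv_mem hbQ) t⁻¹)
      exact Q.mul_mem h2 hbQ
  have hfac' : Fac (cj t⁻¹ P) := P4 t⁻¹ P hP
  rcases P8 (cj t⁻¹ P) P hfac' hP with heq | hcomm
  · intro b hb
    have hu : t⁻¹ * b⁻¹ * t ∈ P := by
      rw [← heq]
      exact mem_cj.mpr (memc (by group) (P.inv_mem hb))
    have hwP : (t⁻¹ * b⁻¹ * t) * b ∈ P := P.mul_mem hu hb
    have hbot := (hdi P hP hPle).1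
    have hmem : (t⁻¹ * b⁻¹ * t) * b ∈ P ⊓ (X ⊓ Q) := ⟨hwP, hw b hb⟩
    rw [hbot, Subgroup.mem_bot] at hmem
    calc t * b = (b * t) * ((t⁻¹ * b⁻¹ * t) * b) := by group
    _ = (b * t) * 1 := by rw [hmem]
    _ = b * t := by group
  · exfalso
    apply P1 P hP
    refine trapAbel hH1 P
      (finiteIndex_of_le' (fun q hq => mem_normalizer_of_cj_eq (P3 P hP q hq)) hQf) ?_
    intro b hb c hc
    have hu : t⁻¹ * b⁻¹ * t ∈ cj t⁻¹ P := mem_cj.mpr (memc (by group) (P.inv_mem hb))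
    have h1 : (t⁻¹ * b⁻¹ * t) * c = c * (t⁻¹ * b⁻¹ * t) := hcomm _ hu c hc
    have h2 : c * ((t⁻¹ * b⁻¹ * t) * b) = ((t⁻¹ * b⁻¹ * t) * b) * c :=
      (hdi P hP hPle).2 c hc _ (hw b hb)
    have e1 : (t⁻¹ * b⁻¹ * t) * (c * b) = (t⁻¹ * b⁻¹ * t) * (b * c) := by
      calc (t⁻¹ * b⁻¹ * t) * (c * b) = ((t⁻¹ * b⁻¹ * t) * c) * b := by group
      _ = (c * (t⁻¹ * b⁻¹ * t)) * b := by rw [h1]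
      _ = c * ((t⁻¹ * b⁻¹ * t) * b) := by group
      _ = ((t⁻¹ * b⁻¹ * t) * b) * c := h2
      _ = (t⁻¹ * b⁻¹ * t) * (b * c) := by group
    exact (mul_left_cancel e1).symm

/-- The commuting pattern lemma. -/
lemma pat (x t : G) (U V : Subgroup G)
    (hxU : ∀ u ∈ U, u * x = x * u)
    (htV : ∀ v ∈ V, v * t = t * v)
    (htU : cj t U = U) (hxV : cj x V = V)
    (hbot : ∀ w : G, (∀ c ∈ U, c * w = w * c) → (∀ c ∈ V, c * w = w * c) → w = 1) :
    x * t = t * x := by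
  have hU : ∀ c ∈ U, c * (x⁻¹ * t⁻¹ * x * t) = (x⁻¹ * t⁻¹ * x * t) * c := by
    intro c hc
    have hc1 : t * c * t⁻¹ ∈ U := by
      have h2 := cj_eq_self_inv htU
      have h3 := mem_cj.mp (show c ∈ cj t⁻¹ U by rw [h2]; exact hc)
      exact memc (by group) h3
    have e2 : c * t⁻¹ = t⁻¹ * (t * c * t⁻¹) := by group
    have e3 : (t * c * t⁻¹) * x = x * (t * c * t⁻¹) := hxU _ hc1
    have e4 : c * x⁻¹ = x⁻¹ * c := by
      have h5 := hxU c hc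
      calc c * x⁻¹ = x⁻¹ * (x * c) * x⁻¹ := by group
      _ = x⁻¹ * (c * x) * x⁻¹ := by rw [← h5]
      _ = x⁻¹ * c := by group
    calc c * (x⁻¹ * t⁻¹ * x * t) = (c * x⁻¹) * t⁻¹ * x * t := by group
    _ = (x⁻¹ * c) * t⁻¹ * x * t := by rw [e4]
    _ = x⁻¹ * (c * t⁻¹) * x * t := by group
    _ = x⁻¹ * (t⁻¹ * (t * c * t⁻¹)) * x * t := by rw [e2]
    _ = (x⁻¹ * t⁻¹) * ((t * c * t⁻¹) * x) * t := by group
    _ = (x⁻¹ * t⁻¹) * (x * (t * c * t⁻¹)) * t := by rw [e3]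
    _ = (x⁻¹ * t⁻¹ * x * t) * c := by group
  have hV : ∀ c ∈ V, c * (x⁻¹ * t⁻¹ * x * t) = (x⁻¹ * t⁻¹ * x * t) * c := by
    intro c hc
    have hc2 : x * c * x⁻¹ ∈ V := by
      have h2 := cj_eq_self_inv hxV
      have h3 := mem_cj.mp (show c ∈ cj x⁻¹ V by rw [h2]; exact hc)
      exact memc (by group) h3
    have e2 : c * x⁻¹ = x⁻¹ * (x * c * x⁻¹) := by group
    have e3 : (x * c * x⁻¹) * t⁻¹ = t⁻¹ * (x * c * x⁻¹) := by
      have h5 := htV _ hc2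
      calc (x * c * x⁻¹) * t⁻¹ = t⁻¹ * (t * (x * c * x⁻¹)) * t⁻¹ := by group
      _ = t⁻¹ * ((x * c * x⁻¹) * t) * t⁻¹ := by rw [← h5]
      _ = t⁻¹ * (x * c * x⁻¹) := by group
    calc c * (x⁻¹ * t⁻¹ * x * t) = (c * x⁻¹) * t⁻¹ * x * t := by group
    _ = (x⁻¹ * (x * c * x⁻¹)) * t⁻¹ * x * t := by rw [e2]
    _ = x⁻¹ * ((x * c * x⁻¹) * t⁻¹) * x * t := by group
    _ = x⁻¹ * (t⁻¹ * (x * c * x⁻¹)) * x * t := by rw [e3]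
    _ = (x⁻¹ * t⁻¹) * (x * (c * t)) := by group
    _ = (x⁻¹ * t⁻¹) * (x * (t * c)) := by rw [htV c hc]
    _ = (x⁻¹ * t⁻¹ * x * t) * c := by group
  have hw1 := hbot _ hU hV
  calc x * t = (t * x) * (x⁻¹ * t⁻¹ * x * t) := by group
  _ = (t * x) * 1 := by rw [hw1]
  _ = t * x := by group

lemma orbit_finite {A : Subgroup G} (hA : (Subgroup.normalizer ((A : Subgroup G) : Set G)).FiniteIndex) :
    {P : Subgroup G | ∃ g, P = cj g A}.Finite := by
  haveI := hA
  haveI : Finite (G ⧸ (Subgroup.normalizer ((A : Subgroup G) : Set G))) := (Subgroup.normalizer ((A : Subgroup G) : Set G)).finite_quotient_of_finiteIndex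
  have hsound : ∀ a b : G, @Setoid.r G (QuotientGroup.leftRel (Subgroup.normalizer ((A : Subgroup G) : Set G))) a b →
      cj a A = cj b A := by
    intro a b hab
    rw [QuotientGroup.leftRel_apply] at hab
    have e : b = a * (a⁻¹ * b) := by group
    rw [e, ← cj_cj, cj_eq_self_of_mem_normalizer hab]
  let f : G ⧸ (Subgroup.normalizer ((A : Subgroup G) : Set G)) → Subgroup G := fun q => Quotient.liftOn' q (fun g => cj g A) hsound
  have hsub : {P : Subgroup G | ∃ g, P = cj g A} ⊆ Set.range f := by
    rintro P ⟨g, rfl⟩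
    exact ⟨Quotient.mk'' g, rfl⟩
  exact (Set.finite_range f).subset hsub

lemma normalizer_inf_le (H K : Subgroup G) :
    (Subgroup.normalizer ((H : Subgroup G) : Set G)) ⊓ (Subgroup.normalizer ((K : Subgroup G) : Set G)) ≤ (Subgroup.normalizer ((H ⊓ K : Subgroup G) : Set G)) := by
  intro g hg
  obtain ⟨h1, h2⟩ := Subgroup.mem_inf.mp hg
  rw [Subgroup.mem_normalizer_iff] at h1 h2 ⊢
  intro x
  rw [Subgroup.mem_inf, Subgroup.mem_inf]
  exact and_congr (h1 x) (h2 x)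

lemma cj_sSup (g : G) (S : Set (Subgroup G)) : cj g (sSup S) = sSup ((cj g) '' S) := by
  apply le_antisymm
  · rw [cj_le_iff]
    apply sSup_le
    intro P hP
    have h1 : cj g P ≤ sSup ((cj g) '' S) := le_sSup ⟨P, hP, rfl⟩
    have h2 := cj_mono (g := g⁻¹) h1
    rwa [cj_inv_cj'] at h2
  · apply sSup_le
    rintro P ⟨P0, hP0, rfl⟩
    exact cj_mono (le_sSup hP0)

lemma sSup_comm_of_parts {S : Set (Subgroup G)} {t : G}
    (h : ∀ P ∈ S, ∀ p ∈ P, t * p = p * t) : ∀ v ∈ sSup S, v * t = t * v := by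
  have hle : sSup S ≤ Subgroup.centralizer {t} := by
    apply sSup_le
    intro P hP p hp
    rw [Subgroup.mem_centralizer_iff]
    intro m hm
    rw [Set.mem_singleton_iff] at hm
    subst hm
    exact h P hP p hp
  intro v hv
  have h2 := hle hv
  rw [Subgroup.mem_centralizer_iff] at h2
  exact (h2 t rfl).symm

/-- The key "nugget": for X with Q ≤ N(X), centralizers of X ⊓ Q and X agree. -/
lemma nugget (hH1 : HypH1 G) (hH2 : HypH2 G) (X Q : Subgroup G) (hQn : Q.Normal)
    (hQf : Q.FiniteIndex) (hQX : Q ≤ (Subgroup.normalizer ((X : Subgroup G) : Set G))) (hXfin : (Subgroup.normalizer ((X : Subgroup G) : Set G)).FiniteIndex) :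
    Cz (X ⊓ Q) = Cz X := by
  refine le_antisymm ?_ (Cz_anti inf_le_left)
  by_cases hA : X ⊓ Q = ⊥
  · have hXfinite : Finite ↥X := by
      haveI := hQf
      have hinj : Function.Injective (fun x : ↥X => (QuotientGroup.mk x.1 : G ⧸ Q)) := by
        intro a b hab
        have h2 : (a : G)⁻¹ * b ∈ Q := QuotientGroup.eq.mp hab
        have h3 : (a : G)⁻¹ * b ∈ X := X.mul_mem (X.inv_mem a.2) b.2
        have h4 : (a : G)⁻¹ * b ∈ X ⊓ Q := ⟨h3, h2⟩
        rw [hA, Subgroup.mem_bot] at h4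
        exact Subtype.ext (inv_mul_eq_one.mp h4)
      exact Finite.of_injective _ hinj
    rw [hA, trapFinite hH1 X hXfin hXfinite]
  · have hANQ : Q ≤ (Subgroup.normalizer ((X ⊓ Q : Subgroup G) : Set G)) := by
      intro q hq
      apply mem_normalizer_of_cj_eq
      rw [cj_inf, cj_eq_self_of_normal hQn, cj_eq_self_of_mem_normalizer (hQX hq)]
    have hAfin : (Subgroup.normalizer ((X ⊓ Q : Subgroup G) : Set G)).FiniteIndex := finiteIndex_of_le' hANQ hQf
    have hrfin : {P : Subgroup G | ∃ g, P = cj g (X ⊓ Q)}.Finite := orbit_finite hAfin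
    have hrcj : ∀ (g : G), ∀ P ∈ {P : Subgroup G | ∃ g, P = cj g (X ⊓ Q)},
        cj g P ∈ {P : Subgroup G | ∃ g, P = cj g (X ⊓ Q)} := by
      rintro g P ⟨h, rfl⟩
      exact ⟨g * h, cj_cj g h _⟩
    have hrleQ : ∀ P ∈ {P : Subgroup G | ∃ g, P = cj g (X ⊓ Q)}, P ≤ Q := by
      rintro P ⟨g, rfl⟩
      have h1 := cj_mono (g := g) (inf_le_right : X ⊓ Q ≤ Q)
      rwa [cj_eq_self_of_normal hQn] at h1
    have hrnorm : ∀ P ∈ {P : Subgroup G | ∃ g, P = cj g (X ⊓ Q)}, ∀ q ∈ Q, cj q P = P := by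
      rintro P ⟨g, rfl⟩ q hq
      have hq' : g⁻¹ * q * g ∈ Q := memc (by group) (hQn.conj_mem q hq g⁻¹)
      have h1 : q * g = g * (g⁻¹ * q * g) := by group
      rw [cj_cj, h1, ← cj_cj]
      congr 1
      exact cj_eq_self_of_mem_normalizer (hANQ hq')
    have hrne : ∃ P ∈ {P : Subgroup G | ∃ g, P = cj g (X ⊓ Q)}, P ≠ ⊥ :=
      ⟨X ⊓ Q, ⟨1, (cj_one _).symm⟩, hA⟩
    obtain ⟨Fac, P1, P2, P3, P4, P7, P8, Pjoint, PH2⟩ :=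
      core hH1 hH2 Q hQn hQf _ hrfin hrcj hrleQ hrnorm hrne
    have hAroot : X ⊓ Q ∈ {P : Subgroup G | ∃ g, P = cj g (X ⊓ Q)} :=
      ⟨1, (cj_one _).symm⟩
    have hdi : ∀ P, Fac P → ¬ P ≤ X ⊓ Q →
        (P ⊓ (X ⊓ Q) = ⊥ ∧ ∀ p ∈ P, ∀ r ∈ X ⊓ Q, p * r = r * p) := by
      intro P hP hle
      rcases P7 P (X ⊓ Q) hP hAroot with h | h
      · exact absurd h hle
      · exact h
    have hM := claimM hH1 Q hQn hQf Fac P1 P2 P3 P4 P8 X hQX hdi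
    intro z hz
    rw [mem_Cz]
    intro t ht
    have hcjA : ∀ (g : G), g ∈ (Subgroup.normalizer ((X ⊓ Q : Subgroup G) : Set G)) →
        (cj g (sSup {P : Subgroup G | Fac P ∧ P ≤ X ⊓ Q}) =
          sSup {P : Subgroup G | Fac P ∧ P ≤ X ⊓ Q} ∧
        cj g (sSup {P : Subgroup G | Fac P ∧ ¬ P ≤ X ⊓ Q}) =
          sSup {P : Subgroup G | Fac P ∧ ¬ P ≤ X ⊓ Q}) := by
      intro g hg
      have hgA : cj g (X ⊓ Q) = X ⊓ Q := cj_eq_self_of_mem_normalizer hg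
      have hgA' : cj g⁻¹ (X ⊓ Q) = X ⊓ Q := cj_eq_self_inv hgA
      constructor
      · rw [cj_sSup]
        congr 1
        ext P
        constructor
        · rintro ⟨P0, ⟨h1, h2⟩, rfl⟩
          refine ⟨P4 g P0 h1, ?_⟩
          rw [← hgA]
          exact cj_mono h2
        · rintro ⟨h1, h2⟩
          refine ⟨cj g⁻¹ P, ⟨P4 g⁻¹ P h1, ?_⟩, by rw [cj_inv_cj]⟩
          rw [← hgA']
          exact cj_mono h2
      · rw [cj_sSup]
        congr 1
        ext P
        constructor
        · rintro ⟨P0, ⟨h1, h2⟩, rfl⟩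
          refine ⟨P4 g P0 h1, fun hc => h2 ?_⟩
          have h3 := cj_mono (g := g⁻¹) hc
          rwa [cj_inv_cj', hgA'] at h3
        · rintro ⟨h1, h2⟩
          refine ⟨cj g⁻¹ P, ⟨P4 g⁻¹ P h1, fun hc => h2 ?_⟩, by rw [cj_inv_cj]⟩
          have h3 := cj_mono (g := g) hc
          rwa [cj_inv_cj, hgA] at h3
    have hxU : ∀ u ∈ sSup {P : Subgroup G | Fac P ∧ P ≤ X ⊓ Q}, u * z = z * u := by
      intro u hu
      have hUA : sSup {P : Subgroup G | Fac P ∧ P ≤ X ⊓ Q} ≤ X ⊓ Q :=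
        sSup_le fun P hP => hP.2
      exact mem_Cz.mp hz u (hUA hu)
    have htV : ∀ v ∈ sSup {P : Subgroup G | Fac P ∧ ¬ P ≤ X ⊓ Q}, v * t = t * v := by
      apply sSup_comm_of_parts
      intro P hP p hp
      exact hM P hP.1 hP.2 t ht p hp
    have htmem : t ∈ (Subgroup.normalizer ((X ⊓ Q : Subgroup G) : Set G)) := by
      apply mem_normalizer_of_cj_eq
      rw [cj_inf, cj_eq_self_of_normal hQn,
        cj_eq_self_of_mem_normalizer (Subgroup.le_normalizer ht)]
    have hzmem : z ∈ (Subgroup.normalizer ((X ⊓ Q : Subgroup G) : Set G)) := Cz_le_normalizer hz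
    have hbot : ∀ w : G,
        (∀ c ∈ sSup {P : Subgroup G | Fac P ∧ P ≤ X ⊓ Q}, c * w = w * c) →
        (∀ c ∈ sSup {P : Subgroup G | Fac P ∧ ¬ P ≤ X ⊓ Q}, c * w = w * c) → w = 1 := by
      intro w h1 h2
      apply Pjoint w
      intro P hP p hp
      by_cases hle : P ≤ X ⊓ Q
      · exact h1 p ((le_sSup (show P ∈ {P : Subgroup G | Fac P ∧ P ≤ X ⊓ Q} from ⟨hP, hle⟩)) hp)
      · exact h2 p ((le_sSup (show P ∈ {P : Subgroup G | Fac P ∧ ¬ P ≤ X ⊓ Q} from ⟨hP, hle⟩)) hp)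
    have main := pat z t _ _ hxU htV ((hcjA t htmem).1) ((hcjA z hzmem).2) hbot
    exact main.symm

/-- product subgroup A·C when C normalizes A. -/
def prodAC (A C : Subgroup G) (hnorm : ∀ c ∈ C, cj c A = A) : Subgroup G where
  carrier := {x | ∃ a ∈ A, ∃ c ∈ C, x = a * c}
  one_mem' := ⟨1, A.one_mem, 1, C.one_mem, by group⟩
  mul_mem' := by
    rintro x y ⟨a, ha, c, hc, rfl⟩ ⟨a', ha', c', hc', rfl⟩
    have h0 := hnorm c⁻¹ (C.inv_mem hc)
    have h1 : c * a' * c⁻¹ ∈ A := by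
      have h2 := mem_cj.mp (show a' ∈ cj c⁻¹ A by rw [h0]; exact ha')
      exact memc (by group) h2
    exact ⟨a * (c * a' * c⁻¹), A.mul_mem ha h1, c * c', C.mul_mem hc hc', by group⟩
  inv_mem' := by
    rintro x ⟨a, ha, c, hc, rfl⟩
    have h0 := hnorm c hc
    have h1 : c⁻¹ * a⁻¹ * c ∈ A :=
      mem_cj.mp (show a⁻¹ ∈ cj c A by rw [h0]; exact A.inv_mem ha)
    exact ⟨c⁻¹ * a⁻¹ * c, h1, c⁻¹, C.inv_mem hc, by group⟩

/-- The "gem": commutators of elements of CC(X ⊓ Q) in a suitable finite-index subgroup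
lie in X ⊓ Q. -/
lemma gem (hH1 : HypH1 G) (hH2 : HypH2 G) (X Q : Subgroup G) (hQn : Q.Normal)
    (hQf : Q.FiniteIndex) (hQX : Q ≤ (Subgroup.normalizer ((X : Subgroup G) : Set G))) :
    ∃ R : Subgroup G, R.FiniteIndex ∧ ∀ u v : G, u ∈ Cz (Cz (X ⊓ Q)) →
      v ∈ Cz (Cz (X ⊓ Q)) → u ∈ R → v ∈ R → ⁅u, v⁆ ∈ X ⊓ Q := by
  by_cases hA : X ⊓ Q = ⊥
  · refine ⟨⊤, inferInstance, ?_⟩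
    intro u v hu hv _ _
    rw [hA] at hu hv ⊢
    have hCzbot : Cz (⊥ : Subgroup G) = ⊤ := by
      rw [eq_top_iff]
      intro w _
      rw [mem_Cz]
      intro h hh
      rw [Subgroup.mem_bot] at hh
      subst hh
      group
    rw [hCzbot] at hu hv
    rw [Subgroup.mem_bot, commutatorElement_eq_one_iff_mul_comm]
    exact (mem_Cz.mp hu v trivial).symm
  · have hANQ : Q ≤ (Subgroup.normalizer ((X ⊓ Q : Subgroup G) : Set G)) := by
      intro q hq
      apply mem_normalizer_of_cj_eq
      rw [cj_inf, cj_eq_self_of_normal hQn, cj_eq_self_of_mem_normalizer (hQX hq)]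
    have hAfin : (Subgroup.normalizer ((X ⊓ Q : Subgroup G) : Set G)).FiniteIndex := finiteIndex_of_le' hANQ hQf
    have hrfin : {P : Subgroup G | ∃ g, P = cj g (X ⊓ Q)}.Finite := orbit_finite hAfin
    have hrcj : ∀ (g : G), ∀ P ∈ {P : Subgroup G | ∃ g, P = cj g (X ⊓ Q)},
        cj g P ∈ {P : Subgroup G | ∃ g, P = cj g (X ⊓ Q)} := by
      rintro g P ⟨h, rfl⟩
      exact ⟨g * h, cj_cj g h _⟩
    have hrleQ : ∀ P ∈ {P : Subgroup G | ∃ g, P = cj g (X ⊓ Q)}, P ≤ Q := by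
      rintro P ⟨g, rfl⟩
      have h1 := cj_mono (g := g) (inf_le_right : X ⊓ Q ≤ Q)
      rwa [cj_eq_self_of_normal hQn] at h1
    have hrnorm : ∀ P ∈ {P : Subgroup G | ∃ g, P = cj g (X ⊓ Q)}, ∀ q ∈ Q, cj q P = P := by
      rintro P ⟨g, rfl⟩ q hq
      have hq' : g⁻¹ * q * g ∈ Q := memc (by group) (hQn.conj_mem q hq g⁻¹)
      have h1 : q * g = g * (g⁻¹ * q * g) := by group
      rw [cj_cj, h1, ← cj_cj]
      congr 1
      exact cj_eq_self_of_mem_normalizer (hANQ hq')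
    have hrne : ∃ P ∈ {P : Subgroup G | ∃ g, P = cj g (X ⊓ Q)}, P ≠ ⊥ :=
      ⟨X ⊓ Q, ⟨1, (cj_one _).symm⟩, hA⟩
    obtain ⟨Fac, P1, P2, P3, P4, P7, P8, Pjoint, PH2⟩ :=
      core hH1 hH2 Q hQn hQf _ hrfin hrcj hrleQ hrnorm hrne
    have hAroot : X ⊓ Q ∈ {P : Subgroup G | ∃ g, P = cj g (X ⊓ Q)} :=
      ⟨1, (cj_one _).symm⟩
    have hCnorm : ∀ c ∈ Cz (X ⊓ Q) ⊓ Q, cj c (X ⊓ Q) = X ⊓ Q := by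
      intro c hc
      exact cj_eq_self_of_mem_normalizer (hANQ hc.2)
    set W := prodAC (X ⊓ Q) (Cz (X ⊓ Q) ⊓ Q) hCnorm with hW
    have hfacW : ∀ P, Fac P → P ≤ W := by
      intro P hP
      rcases P7 P (X ⊓ Q) hP hAroot with h | ⟨hb, hcomm⟩
      · intro p hp
        exact ⟨p, h hp, 1, (Cz (X ⊓ Q) ⊓ Q).one_mem, by group⟩
      · intro p hp
        have hpC : p ∈ Cz (X ⊓ Q) := by
          rw [mem_Cz]
          intro r hr
          exact (hcomm p hp r hr).symm
        exact ⟨1, (X ⊓ Q).one_mem, p, ⟨hpC, P2 P hP hp⟩, by group⟩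
    obtain ⟨R, hRfin, hRcomm⟩ := PH2 W hfacW
    refine ⟨R, hRfin, ?_⟩
    intro u v hu hv huR hvR
    have h1 : ⁅u, v⁆ ∈ W := hRcomm (Subgroup.commutator_mem_commutator huR hvR)
    obtain ⟨a, ha, c, hc, he⟩ := h1
    have hCC : ⁅u, v⁆ ∈ Cz (Cz (X ⊓ Q)) := by
      rw [commutatorElement_def]
      exact mul_mem (mul_mem (mul_mem hu hv) ((Cz (Cz (X ⊓ Q))).inv_mem hu))
        ((Cz (Cz (X ⊓ Q))).inv_mem hv)
    have haCC : a ∈ Cz (Cz (X ⊓ Q)) := by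
      rw [mem_Cz]
      intro h hh
      exact (mem_Cz.mp hh a ha).symm
    have hcCC : c ∈ Cz (Cz (X ⊓ Q)) := by
      have he2 : c = a⁻¹ * ⁅u, v⁆ := by rw [he]; group
      rw [he2]
      exact mul_mem ((Cz (Cz (X ⊓ Q))).inv_mem haCC) hCC
    have hV0 : Cz (X ⊓ Q) ⊓ Cz (Cz (X ⊓ Q)) = ⊥ := by
      apply trapAbel hH1
      · refine finiteIndex_of_le' ?_ hQf
        intro q hq
        apply mem_normalizer_of_cj_eq
        rw [cj_inf, cj_Cz, cj_Cz, cj_Cz, cj_eq_self_of_mem_normalizer (hANQ hq)]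
      · intro a' ha' b' hb'
        exact mem_Cz.mp hb'.2 a' ha'.1
    have hcmem : c ∈ Cz (X ⊓ Q) ⊓ Cz (Cz (X ⊓ Q)) := ⟨hc.1, hcCC⟩
    rw [hV0, Subgroup.mem_bot] at hcmem
    rw [he, hcmem, mul_one]
    exact ha

lemma Cz_bot : Cz (⊥ : Subgroup G) = ⊤ := by
  rw [eq_top_iff]
  intro w _
  rw [mem_Cz]
  intro h hh
  rw [Subgroup.mem_bot] at hh
  subst hh
  group

lemma bot_of_inf_bot (hH1 : HypH1 G) (X Q : Subgroup G) (hQf : Q.FiniteIndex)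
    (hXfin : (Subgroup.normalizer ((X : Subgroup G) : Set G)).FiniteIndex) (hA : X ⊓ Q = ⊥) : X = ⊥ := by
  have hXfinite : Finite ↥X := by
    haveI := hQf
    have hinj : Function.Injective (fun x : ↥X => (QuotientGroup.mk x.1 : G ⧸ Q)) := by
      intro a b hab
      have h2 : (a : G)⁻¹ * b ∈ Q := QuotientGroup.eq.mp hab
      have h3 : (a : G)⁻¹ * b ∈ X := X.mul_mem (X.inv_mem a.2) b.2
      have h4 : (a : G)⁻¹ * b ∈ X ⊓ Q := ⟨h3, h2⟩
      rw [hA, Subgroup.mem_bot] at h4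
      exact Subtype.ext (inv_mul_eq_one.mp h4)
    exact Finite.of_injective _ hinj
  exact trapFinite hH1 X hXfin hXfinite

lemma cj_sSup_facSets (Fac : Subgroup G → Prop)
    (P4 : ∀ (g : G), ∀ P, Fac P → Fac (cj g P)) (A : Subgroup G) (g : G)
    (hgA : cj g A = A) :
    cj g (sSup {P : Subgroup G | Fac P ∧ P ≤ A}) = sSup {P : Subgroup G | Fac P ∧ P ≤ A} ∧
    cj g (sSup {P : Subgroup G | Fac P ∧ ¬ P ≤ A}) =
      sSup {P : Subgroup G | Fac P ∧ ¬ P ≤ A} := by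
  have hgA' : cj g⁻¹ A = A := cj_eq_self_inv hgA
  constructor
  · rw [cj_sSup]
    congr 1
    ext P
    constructor
    · rintro ⟨P0, ⟨h1, h2⟩, rfl⟩
      refine ⟨P4 g P0 h1, ?_⟩
      rw [← hgA]
      exact cj_mono h2
    · rintro ⟨h1, h2⟩
      refine ⟨cj g⁻¹ P, ⟨P4 g⁻¹ P h1, ?_⟩, by rw [cj_inv_cj]⟩
      rw [← hgA']
      exact cj_mono h2
  · rw [cj_sSup]
    congr 1
    ext P
    constructor
    · rintro ⟨P0, ⟨h1, h2⟩, rfl⟩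
      refine ⟨P4 g P0 h1, fun hc => h2 ?_⟩
      have h3 := cj_mono (g := g⁻¹) hc
      rwa [cj_inv_cj', hgA'] at h3
    · rintro ⟨h1, h2⟩
      refine ⟨cj g⁻¹ P, ⟨P4 g⁻¹ P h1, fun hc => h2 ?_⟩, by rw [cj_inv_cj]⟩
      have h3 := cj_mono (g := g) hc
      rwa [cj_inv_cj, hgA] at h3

lemma mem_CzCz_of_mem {b : G} {W : Subgroup G} (hb : b ∈ W) : b ∈ Cz (Cz W) := by
  rw [mem_Cz]
  intro h hh
  exact (mem_Cz.mp hh b hb).symm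

/-- per-subgroup package: nugget + gem combined. -/
lemma perW (hH1 : HypH1 G) (hH2 : HypH2 G) (W : Subgroup G)
    (hW : (Subgroup.normalizer ((W : Subgroup G) : Set G)).FiniteIndex) :
    ∃ R : Subgroup G, R.FiniteIndex ∧ ∀ u v : G, u ∈ Cz (Cz W) → v ∈ Cz (Cz W) →
      u ∈ R → v ∈ R → ⁅u, v⁆ ∈ W := by
  haveI := hW
  have hQn : (Subgroup.normalizer ((W : Subgroup G) : Set G)).normalCore.Normal := Subgroup.normalCore_normal _
  have hQf : (Subgroup.normalizer ((W : Subgroup G) : Set G)).normalCore.FiniteIndex := Subgroup.finiteIndex_normalCore _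
  have hQX : (Subgroup.normalizer ((W : Subgroup G) : Set G)).normalCore ≤ (Subgroup.normalizer ((W : Subgroup G) : Set G)) := Subgroup.normalCore_le _
  have hnug := nugget hH1 hH2 W (Subgroup.normalizer ((W : Subgroup G) : Set G)).normalCore hQn hQf hQX hW
  obtain ⟨R, hRf, hRp⟩ := gem hH1 hH2 W (Subgroup.normalizer ((W : Subgroup G) : Set G)).normalCore hQn hQf hQX
  refine ⟨R, hRf, ?_⟩
  intro u v hu hv huR hvR
  rw [← hnug] at hu hv
  exact (hRp u v hu hv huR hvR).1

lemma mainLE (hH1 : HypH1 G) (hH2 : HypH2 G) (H₁ H₂ K₁ K₂ : Subgroup G)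
    (hHn₁ : (Subgroup.normalizer ((H₁ : Subgroup G) : Set G)).FiniteIndex) (hHn₂ : (Subgroup.normalizer ((H₂ : Subgroup G) : Set G)).FiniteIndex)
    (hKn₁ : (Subgroup.normalizer ((K₁ : Subgroup G) : Set G)).FiniteIndex) (hKn₂ : (Subgroup.normalizer ((K₂ : Subgroup G) : Set G)).FiniteIndex)
    (hH : Cz H₁ = Cz H₂) (hK : Cz K₁ = Cz K₂) :
    Cz (H₁ ⊓ K₁) ≤ Cz (H₂ ⊓ K₂) := by
  obtain ⟨R1, hR1f, hR1p⟩ := perW hH1 hH2 H₁ hHn₁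
  obtain ⟨R2, hR2f, hR2p⟩ := perW hH1 hH2 H₂ hHn₂
  obtain ⟨R3, hR3f, hR3p⟩ := perW hH1 hH2 K₁ hKn₁
  obtain ⟨R4, hR4f, hR4p⟩ := perW hH1 hH2 K₂ hKn₂
  haveI := hHn₁; haveI := hHn₂; haveI := hKn₁; haveI := hKn₂
  haveI := hR1f; haveI := hR2f; haveI := hR3f; haveI := hR4f
  set Q := ((Subgroup.normalizer ((H₁ : Subgroup G) : Set G)).normalCore ⊓ (Subgroup.normalizer ((K₁ : Subgroup G) : Set G)).normalCore ⊓
      ((Subgroup.normalizer ((H₂ : Subgroup G) : Set G)).normalCore ⊓ (Subgroup.normalizer ((K₂ : Subgroup G) : Set G)).normalCore)) ⊓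
      (R1.normalCore ⊓ R3.normalCore ⊓ (R2.normalCore ⊓ R4.normalCore)) with hQdef
  have hQn : Q.Normal := by rw [hQdef]; infer_instance
  have hQf : Q.FiniteIndex := by rw [hQdef]; infer_instance
  have hA1c : Q ≤ (Subgroup.normalizer ((H₁ : Subgroup G) : Set G)).normalCore :=
    le_trans (le_trans inf_le_left inf_le_left) inf_le_left
  have hA3c : Q ≤ (Subgroup.normalizer ((K₁ : Subgroup G) : Set G)).normalCore :=
    le_trans (le_trans inf_le_left inf_le_left) inf_le_right
  have hA2c : Q ≤ (Subgroup.normalizer ((H₂ : Subgroup G) : Set G)).normalCore :=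
    le_trans (le_trans inf_le_left inf_le_right) inf_le_left
  have hA4c : Q ≤ (Subgroup.normalizer ((K₂ : Subgroup G) : Set G)).normalCore :=
    le_trans (le_trans inf_le_left inf_le_right) inf_le_right
  have hB1 : Q ≤ R1 :=
    le_trans (le_trans (le_trans inf_le_right inf_le_left) inf_le_left)
      (Subgroup.normalCore_le _)
  have hB3 : Q ≤ R3 :=
    le_trans (le_trans (le_trans inf_le_right inf_le_left) inf_le_right)
      (Subgroup.normalCore_le _)
  have hB2 : Q ≤ R2 :=
    le_trans (le_trans (le_trans inf_le_right inf_le_right) inf_le_left)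
      (Subgroup.normalCore_le _)
  have hB4 : Q ≤ R4 :=
    le_trans (le_trans (le_trans inf_le_right inf_le_right) inf_le_right)
      (Subgroup.normalCore_le _)
  have hQN1 : Q ≤ (Subgroup.normalizer ((H₁ ⊓ K₁ : Subgroup G) : Set G)) :=
    le_trans (le_inf (hA1c.trans (Subgroup.normalCore_le _))
      (hA3c.trans (Subgroup.normalCore_le _))) (normalizer_inf_le H₁ K₁)
  have hQN2 : Q ≤ (Subgroup.normalizer ((H₂ ⊓ K₂ : Subgroup G) : Set G)) :=
    le_trans (le_inf (hA2c.trans (Subgroup.normalCore_le _))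
      (hA4c.trans (Subgroup.normalCore_le _))) (normalizer_inf_le H₂ K₂)
  have hX2fin : (Subgroup.normalizer ((H₂ ⊓ K₂ : Subgroup G) : Set G)).FiniteIndex := finiteIndex_of_le' hQN2 hQf
  by_cases hA2bot : (H₂ ⊓ K₂) ⊓ Q = ⊥
  · rw [bot_of_inf_bot hH1 (H₂ ⊓ K₂) Q hQf hX2fin hA2bot, Cz_bot]
    exact le_top
  · have hANQ1 : Q ≤ (Subgroup.normalizer (((H₁ ⊓ K₁) ⊓ Q : Subgroup G) : Set G)) := by
      intro q hq
      apply mem_normalizer_of_cj_eq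
      rw [cj_inf, cj_eq_self_of_normal hQn, cj_eq_self_of_mem_normalizer (hQN1 hq)]
    have hANQ2 : Q ≤ (Subgroup.normalizer (((H₂ ⊓ K₂) ⊓ Q : Subgroup G) : Set G)) := by
      intro q hq
      apply mem_normalizer_of_cj_eq
      rw [cj_inf, cj_eq_self_of_normal hQn, cj_eq_self_of_mem_normalizer (hQN2 hq)]
    have hrfin : ({P : Subgroup G | ∃ g, P = cj g ((H₁ ⊓ K₁) ⊓ Q)} ∪
        {P : Subgroup G | ∃ g, P = cj g ((H₂ ⊓ K₂) ⊓ Q)}).Finite :=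
      Set.Finite.union (orbit_finite (finiteIndex_of_le' hANQ1 hQf))
        (orbit_finite (finiteIndex_of_le' hANQ2 hQf))
    have hrcj : ∀ (g : G), ∀ P ∈ ({P : Subgroup G | ∃ g, P = cj g ((H₁ ⊓ K₁) ⊓ Q)} ∪
        {P : Subgroup G | ∃ g, P = cj g ((H₂ ⊓ K₂) ⊓ Q)}),
        cj g P ∈ ({P : Subgroup G | ∃ g, P = cj g ((H₁ ⊓ K₁) ⊓ Q)} ∪
        {P : Subgroup G | ∃ g, P = cj g ((H₂ ⊓ K₂) ⊓ Q)}) := by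
      rintro g P (⟨h, rfl⟩ | ⟨h, rfl⟩)
      · exact Or.inl ⟨g * h, cj_cj g h _⟩
      · exact Or.inr ⟨g * h, cj_cj g h _⟩
    have hrleQ : ∀ P ∈ ({P : Subgroup G | ∃ g, P = cj g ((H₁ ⊓ K₁) ⊓ Q)} ∪
        {P : Subgroup G | ∃ g, P = cj g ((H₂ ⊓ K₂) ⊓ Q)}), P ≤ Q := by
      rintro P (⟨g, rfl⟩ | ⟨g, rfl⟩)
      · have h1 := cj_mono (g := g) (inf_le_right : (H₁ ⊓ K₁) ⊓ Q ≤ Q)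
        rwa [cj_eq_self_of_normal hQn] at h1
      · have h1 := cj_mono (g := g) (inf_le_right : (H₂ ⊓ K₂) ⊓ Q ≤ Q)
        rwa [cj_eq_self_of_normal hQn] at h1
    have hrnorm : ∀ P ∈ ({P : Subgroup G | ∃ g, P = cj g ((H₁ ⊓ K₁) ⊓ Q)} ∪
        {P : Subgroup G | ∃ g, P = cj g ((H₂ ⊓ K₂) ⊓ Q)}), ∀ q ∈ Q, cj q P = P := by
      have key : ∀ (A : Subgroup G), Q ≤ (Subgroup.normalizer ((A : Subgroup G) : Set G)) → ∀ (g : G), ∀ q ∈ Q,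
          cj q (cj g A) = cj g A := by
        intro A hAn g q hq
        have hq' : g⁻¹ * q * g ∈ Q := memc (by group) (hQn.conj_mem q hq g⁻¹)
        have h1 : q * g = g * (g⁻¹ * q * g) := by group
        rw [cj_cj, h1, ← cj_cj]
        congr 1
        exact cj_eq_self_of_mem_normalizer (hAn hq')
      rintro P (⟨g, rfl⟩ | ⟨g, rfl⟩)
      · exact key _ hANQ1 g
      · exact key _ hANQ2 g
    have hrne : ∃ P ∈ ({P : Subgroup G | ∃ g, P = cj g ((H₁ ⊓ K₁) ⊓ Q)} ∪
        {P : Subgroup G | ∃ g, P = cj g ((H₂ ⊓ K₂) ⊓ Q)}), P ≠ ⊥ :=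
      ⟨(H₂ ⊓ K₂) ⊓ Q, Or.inr ⟨1, (cj_one _).symm⟩, hA2bot⟩
    obtain ⟨Fac, P1, P2, P3, P4, P7, P8, Pjoint, _⟩ :=
      core hH1 hH2 Q hQn hQf _ hrfin hrcj hrleQ hrnorm hrne
    have hroot1 : (H₁ ⊓ K₁) ⊓ Q ∈ ({P : Subgroup G | ∃ g, P = cj g ((H₁ ⊓ K₁) ⊓ Q)} ∪
        {P : Subgroup G | ∃ g, P = cj g ((H₂ ⊓ K₂) ⊓ Q)}) := Or.inl ⟨1, (cj_one _).symm⟩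
    have hroot2 : (H₂ ⊓ K₂) ⊓ Q ∈ ({P : Subgroup G | ∃ g, P = cj g ((H₁ ⊓ K₁) ⊓ Q)} ∪
        {P : Subgroup G | ∃ g, P = cj g ((H₂ ⊓ K₂) ⊓ Q)}) := Or.inr ⟨1, (cj_one _).symm⟩
    have hdi2 : ∀ P, Fac P → ¬ P ≤ (H₂ ⊓ K₂) ⊓ Q →
        (P ⊓ ((H₂ ⊓ K₂) ⊓ Q) = ⊥ ∧ ∀ p ∈ P, ∀ r ∈ (H₂ ⊓ K₂) ⊓ Q, p * r = r * p) :=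
      fun P hP hle => (P7 P _ hP hroot2).resolve_left hle
    have hM2 := claimM hH1 Q hQn hQf Fac P1 P2 P3 P4 P8 (H₂ ⊓ K₂) hQN2 hdi2
    have commP : ∀ P : Subgroup G, ∀ b ∈ P, ∀ b' ∈ P, ⁅b, b'⁆ ∈ P := by
      intro P b hb b' hb'
      rw [commutatorElement_def]
      exact mul_mem (mul_mem (mul_mem hb hb') (P.inv_mem hb)) (P.inv_mem hb')
    have trans12 : ∀ P, Fac P → P ≤ (H₂ ⊓ K₂) ⊓ Q → P ≤ (H₁ ⊓ K₁) ⊓ Q := by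
      intro P hP hle
      have hcommP : ∀ b ∈ P, ∀ b' ∈ P, ⁅b, b'⁆ ∈ (H₁ ⊓ K₁) ⊓ Q := by
        intro b hb b' hb'
        have h1 : ⁅b, b'⁆ ∈ H₁ :=
          hR1p b b' (by rw [hH]; exact mem_CzCz_of_mem (hle hb).1.1)
            (by rw [hH]; exact mem_CzCz_of_mem (hle hb').1.1)
            (hB1 (P2 P hP hb)) (hB1 (P2 P hP hb'))
        have h2 : ⁅b, b'⁆ ∈ K₁ :=
          hR3p b b' (by rw [hK]; exact mem_CzCz_of_mem (hle hb).1.2)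
            (by rw [hK]; exact mem_CzCz_of_mem (hle hb').1.2)
            (hB3 (P2 P hP hb)) (hB3 (P2 P hP hb'))
        exact ⟨⟨h1, h2⟩, P2 P hP (commP P b hb b' hb')⟩
      rcases P7 P _ hP hroot1 with h | ⟨hbot', _⟩
      · exact h
      · exfalso
        apply P1 P hP
        refine trapAbel hH1 P (finiteIndex_of_le'
          (fun q hq => mem_normalizer_of_cj_eq (P3 P hP q hq)) hQf) ?_
        intro b hb b' hb'
        have hmem : ⁅b, b'⁆ ∈ P ⊓ ((H₁ ⊓ K₁) ⊓ Q) :=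
          ⟨commP P b hb b' hb', hcommP b hb b' hb'⟩
        rw [hbot', Subgroup.mem_bot] at hmem
        exact commutatorElement_eq_one_iff_mul_comm.mp hmem
    have trans21 : ∀ P, Fac P → P ≤ (H₁ ⊓ K₁) ⊓ Q → P ≤ (H₂ ⊓ K₂) ⊓ Q := by
      intro P hP hle
      have hcommP : ∀ b ∈ P, ∀ b' ∈ P, ⁅b, b'⁆ ∈ (H₂ ⊓ K₂) ⊓ Q := by
        intro b hb b' hb'
        have h1 : ⁅b, b'⁆ ∈ H₂ :=
          hR2p b b' (by rw [← hH]; exact mem_CzCz_of_mem (hle hb).1.1)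
            (by rw [← hH]; exact mem_CzCz_of_mem (hle hb').1.1)
            (hB2 (P2 P hP hb)) (hB2 (P2 P hP hb'))
        have h2 : ⁅b, b'⁆ ∈ K₂ :=
          hR4p b b' (by rw [← hK]; exact mem_CzCz_of_mem (hle hb).1.2)
            (by rw [← hK]; exact mem_CzCz_of_mem (hle hb').1.2)
            (hB4 (P2 P hP hb)) (hB4 (P2 P hP hb'))
        exact ⟨⟨h1, h2⟩, P2 P hP (commP P b hb b' hb')⟩
      rcases P7 P _ hP hroot2 with h | ⟨hbot', _⟩
      · exact h
      · exfalso
        apply P1 P hP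
        refine trapAbel hH1 P (finiteIndex_of_le'
          (fun q hq => mem_normalizer_of_cj_eq (P3 P hP q hq)) hQf) ?_
        intro b hb b' hb'
        have hmem : ⁅b, b'⁆ ∈ P ⊓ ((H₂ ⊓ K₂) ⊓ Q) :=
          ⟨commP P b hb b' hb', hcommP b hb b' hb'⟩
        rw [hbot', Subgroup.mem_bot] at hmem
        exact commutatorElement_eq_one_iff_mul_comm.mp hmem
    have hsetU : {P : Subgroup G | Fac P ∧ P ≤ (H₁ ⊓ K₁) ⊓ Q} =
        {P : Subgroup G | Fac P ∧ P ≤ (H₂ ⊓ K₂) ⊓ Q} := by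
      ext P
      exact ⟨fun ⟨h1, h2⟩ => ⟨h1, trans21 P h1 h2⟩, fun ⟨h1, h2⟩ => ⟨h1, trans12 P h1 h2⟩⟩
    have hsetV : {P : Subgroup G | Fac P ∧ ¬ P ≤ (H₁ ⊓ K₁) ⊓ Q} =
        {P : Subgroup G | Fac P ∧ ¬ P ≤ (H₂ ⊓ K₂) ⊓ Q} := by
      ext P
      constructor
      · rintro ⟨h1, h2⟩
        exact ⟨h1, fun hc => h2 (trans12 P h1 hc)⟩
      · rintro ⟨h1, h2⟩
        exact ⟨h1, fun hc => h2 (trans21 P h1 hc)⟩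
    intro z hz
    rw [mem_Cz]
    intro t ht
    have hz' : z ∈ Cz ((H₁ ⊓ K₁) ⊓ Q) := Cz_anti inf_le_left hz
    have hxU : ∀ u ∈ sSup {P : Subgroup G | Fac P ∧ P ≤ (H₁ ⊓ K₁) ⊓ Q},
        u * z = z * u := by
      have hUle : sSup {P : Subgroup G | Fac P ∧ P ≤ (H₁ ⊓ K₁) ⊓ Q} ≤ (H₁ ⊓ K₁) ⊓ Q :=
        sSup_le (fun P hP => hP.2)
      intro u hu
      exact mem_Cz.mp hz' u (hUle hu)
    have htV : ∀ v ∈ sSup {P : Subgroup G | Fac P ∧ ¬ P ≤ (H₁ ⊓ K₁) ⊓ Q},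
        v * t = t * v := by
      rw [hsetV]
      apply sSup_comm_of_parts
      intro P hP p hp
      exact hM2 P hP.1 hP.2 t ht p hp
    have htA2 : cj t ((H₂ ⊓ K₂) ⊓ Q) = (H₂ ⊓ K₂) ⊓ Q := by
      rw [cj_inf, cj_eq_self_of_normal hQn,
        cj_eq_self_of_mem_normalizer (Subgroup.le_normalizer ht)]
    have htU : cj t (sSup {P : Subgroup G | Fac P ∧ P ≤ (H₁ ⊓ K₁) ⊓ Q}) =
        sSup {P : Subgroup G | Fac P ∧ P ≤ (H₁ ⊓ K₁) ⊓ Q} := by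
      rw [hsetU]
      exact (cj_sSup_facSets Fac P4 _ t htA2).1
    have hzA1 : cj z ((H₁ ⊓ K₁) ⊓ Q) = (H₁ ⊓ K₁) ⊓ Q :=
      cj_eq_self_of_mem_normalizer (Cz_le_normalizer hz')
    have hxV : cj z (sSup {P : Subgroup G | Fac P ∧ ¬ P ≤ (H₁ ⊓ K₁) ⊓ Q}) =
        sSup {P : Subgroup G | Fac P ∧ ¬ P ≤ (H₁ ⊓ K₁) ⊓ Q} :=
      (cj_sSup_facSets Fac P4 _ z hzA1).2
    have hbot : ∀ w : G,
        (∀ c ∈ sSup {P : Subgroup G | Fac P ∧ P ≤ (H₁ ⊓ K₁) ⊓ Q}, c * w = w * c) →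
        (∀ c ∈ sSup {P : Subgroup G | Fac P ∧ ¬ P ≤ (H₁ ⊓ K₁) ⊓ Q}, c * w = w * c) →
        w = 1 := by
      intro w h1 h2
      apply Pjoint w
      intro P hP p hp
      by_cases hle : P ≤ (H₁ ⊓ K₁) ⊓ Q
      · exact h1 p ((le_sSup (show P ∈ {P : Subgroup G | Fac P ∧ P ≤ (H₁ ⊓ K₁) ⊓ Q}
          from ⟨hP, hle⟩)) hp)
      · exact h2 p ((le_sSup (show P ∈ {P : Subgroup G | Fac P ∧ ¬ P ≤ (H₁ ⊓ K₁) ⊓ Q}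
          from ⟨hP, hle⟩)) hp)
    exact (pat z t _ _ hxU htV htU hxV hbot).symm

end Wil

theorem statement7 (hH1 : HypH1 G) (hH2 : HypH2 G)
    (H₁ H₂ K₁ K₂ : Subgroup G)
    (hH₁ : (Subgroup.normalizer (H₁ : Set G)).FiniteIndex) (hH₂ : (Subgroup.normalizer (H₂ : Set G)).FiniteIndex)
    (hK₁ : (Subgroup.normalizer (K₁ : Set G)).FiniteIndex) (hK₂ : (Subgroup.normalizer (K₂ : Set G)).FiniteIndex)
    (hH : Subgroup.centralizer (H₁ : Set G) = Subgroup.centralizer (H₂ : Set G))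
    (hK : Subgroup.centralizer (K₁ : Set G) = Subgroup.centralizer (K₂ : Set G)) :
    Subgroup.centralizer ((H₁ ⊓ K₁ : Subgroup G) : Set G) =
      Subgroup.centralizer ((H₂ ⊓ K₂ : Subgroup G) : Set G) := by
  refine le_antisymm ?_ ?_
  · exact Wil.mainLE hH1 hH2 H₁ H₂ K₁ K₂ hH₁ hH₂ hK₁ hK₂ hH hK
  · exact Wil.mainLE hH1 hH2 H₂ H₁ K₂ K₁ hH₂ hH₁ hK₂ hK₁ hH.symm hK.symm
end
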